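/- arXiv:1906.00484 — 5 statements merged into one kernel-verified Lean document; each statement's English description precedes it below -/
import Mathlib

section
/- For real constants b > c ≥ 0, the integral ∫₀^∞ e^{-c x} K₀(b x) dx equals arccos(c/b) / √(b² - c²), where K₀ is the modified Bessel function of the second kind of order 0, defined by K₀(r) = ∫₀^∞ exp(-r·cosh t) dt for r > 0. -/
open Real Filter Set MeasureTheory Topology

/-- Modified Bessel function of the second kind of order 0. -/
noncomputable def K0 (r : ℝ) : ℝ := ∫ t in Ioi (0 : ℝ), Real.exp (-r * Real.cosh t)

lemma exp_half_le_cosh (t : ℝ) : Real.exp t / 2 ≤ Real.cosh t := by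
  rw [Real.cosh_eq]
  have := (Real.exp_pos (-t)).le
  linarith

lemma int_exp {r : ℝ} (hr : 0 < r) :
    ∫ x in Ioi (0 : ℝ), Real.exp (-(r * x)) = r⁻¹ := by
  have h := integral_comp_mul_left_Ioi (fun u => Real.exp (-u)) 0 hr
  simp only [mul_zero, integral_exp_neg_Ioi, neg_zero, Real.exp_zero, smul_eq_mul,
    mul_one] at h
  simpa using h

lemma pos_denom {b c : ℝ} (hc : 0 ≤ c) (hb : 0 < b) (t : ℝ) :
    0 < c + b * Real.cosh t := by
  have h1 := Real.one_le_cosh t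
  nlinarith

lemma inv_int {b c : ℝ} (hc : 0 ≤ c) (hbc : c < b) :
    IntegrableOn (fun t => (c + b * Real.cosh t)⁻¹) (Ioi (0 : ℝ)) := by
  have hb : 0 < b := hc.trans_lt hbc
  have hg : IntegrableOn (fun t => 2 / b * Real.exp (-t)) (Ioi (0 : ℝ)) := by
    have := (exp_neg_integrableOn_Ioi 0 (one_pos)).const_mul (2 / b)
    simp only [neg_mul, one_mul] at this; exact this
  refine Integrable.mono hg ?_ ?_
  · exact (Continuous.aestronglyMeasurable (by
      exact ((continuous_const.add (continuous_const.mul Real.continuous_cosh)).inv₀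
        (fun t => (pos_denom hc hb t).ne')))).restrict
  · filter_upwards [ae_restrict_mem measurableSet_Ioi] with t ht
    have hpos := pos_denom hc hb t
    have hE : 0 < Real.exp t := Real.exp_pos t
    have hbound : b * Real.exp t / 2 ≤ c + b * Real.cosh t := by
      have := exp_half_le_cosh t
      nlinarith
    have h1 : (c + b * Real.cosh t)⁻¹ ≤ (b * Real.exp t / 2)⁻¹ :=
      inv_anti₀ (by positivity) hbound
    have h2 : (b * Real.exp t / 2)⁻¹ = 2 / b * Real.exp (-t) := by
      rw [Real.exp_neg]; field_simp
    rw [Real.norm_eq_abs, Real.norm_eq_abs, abs_of_pos (inv_pos.mpr hpos),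
      abs_of_pos (show (0:ℝ) < 2 / b * Real.exp (-t) by positivity)]
    rw [h2] at h1; exact h1

lemma key_integral {b c : ℝ} (hc : 0 ≤ c) (hbc : c < b) :
    ∫ t in Ioi (0 : ℝ), (c + b * Real.cosh t)⁻¹
      = Real.arccos (c / b) / Real.sqrt (b ^ 2 - c ^ 2) := by
  have hb : 0 < b := hc.trans_lt hbc
  set s := Real.sqrt (b ^ 2 - c ^ 2) with hs_def
  have hsq : s ^ 2 = b ^ 2 - c ^ 2 := Real.sq_sqrt (by nlinarith)
  have hs : 0 < s := Real.sqrt_pos.mpr (by nlinarith)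
  set F : ℝ → ℝ := fun t => 2 / s * Real.arctan ((b * Real.exp t + c) / s) with hF_def
  have hderiv : ∀ t : ℝ, HasDerivAt F ((c + b * Real.cosh t)⁻¹) t := by
    intro t
    have h1 : HasDerivAt (fun t => (b * Real.exp t + c) / s) (b * Real.exp t / s) t :=
      (((Real.hasDerivAt_exp t).const_mul b).add_const c).div_const s
    have h2 := (Real.hasDerivAt_arctan ((b * Real.exp t + c) / s)).comp t h1
    have h3 := h2.const_mul (2 / s)
    refine HasDerivAt.congr_deriv h3 ?_
    symm
    have hE : 0 < Real.exp t := Real.exp_pos t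
    have hpos := pos_denom hc hb t
    have hw : 0 < 1 + ((b * Real.exp t + c) / s) ^ 2 := by positivity
    rw [Real.cosh_eq, Real.exp_neg]
    field_simp
    ring_nf
    linear_combination hsq
  have htend : Tendsto F atTop (𝓝 (2 / s * (π / 2))) := by
    have harg : Tendsto (fun t => (b * Real.exp t + c) / s) atTop atTop := by
      apply Tendsto.atTop_div_const hs
      exact ((Real.tendsto_exp_atTop.const_mul_atTop hb).atTop_add tendsto_const_nhds)
    exact ((Real.tendsto_arctan_atTop.mono_right nhdsWithin_le_nhds).comp harg).const_mul _
  have hint := inv_int hc hbc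
  have hFTC := integral_Ioi_of_hasDerivAt_of_tendsto
    ((hderiv 0).continuousAt.continuousWithinAt)
    (fun x _ => hderiv x) hint htend
  rw [hFTC]
  -- F 0 = 2/s * arctan ((b + c)/s)
  have hF0 : F 0 = 2 / s * Real.arctan ((b + c) / s) := by simp [hF_def]
  rw [hF0]
  -- arccos (c/b) = π - 2 * arctan ((b+c)/s)
  set q := (b + c) / s with hq_def
  have hq : 0 < q := div_pos (by linarith) hs
  have harctan1 : 0 < Real.arctan q := by
    rw [← Real.arctan_zero]; exact Real.arctan_strictMono hq
  have harctan2 : Real.arctan q < π / 2 := Real.arctan_lt_pi_div_two q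
  have hcos : Real.cos (π - 2 * Real.arctan q) = c / b := by
    rw [Real.cos_pi_sub, Real.cos_two_mul, Real.cos_arctan]
    have h1 : (0:ℝ) < 1 + q ^ 2 := by positivity
    have h2 : Real.sqrt (1 + q ^ 2) ^ 2 = 1 + q ^ 2 := Real.sq_sqrt h1.le
    have h3 : (1 / Real.sqrt (1 + q ^ 2)) ^ 2 = 1 / (1 + q ^ 2) := by
      rw [div_pow, h2, one_pow]
    rw [h3]
    have hq2 : q ^ 2 = (b + c) / (b - c) := by
      rw [hq_def, div_pow, hsq]
      rw [div_eq_div_iff (by nlinarith) (by linarith)]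
      ring
    have h4 : 1 + q ^ 2 = 2 * b / (b - c) := by
      have hbc' : b - c ≠ 0 := by linarith
      rw [hq2]
      field_simp
      ring
    rw [h4]
    field_simp
    ring
  have harccos : Real.arccos (c / b) = π - 2 * Real.arctan q := by
    rw [← hcos, Real.arccos_cos (by linarith) (by linarith)]
  rw [harccos]
  field_simp

/-- `∫₀^∞ e^{-c x} K₀(b x) dx = arccos (c/b) / √(b² - c²)` for `b > c ≥ 0`. -/
theorem stmt_1 (b c : ℝ) (hc : 0 ≤ c) (hbc : c < b) :
    ∫ x in Ioi (0 : ℝ), Real.exp (-c * x) * K0 (b * x)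
      = Real.arccos (c / b) / Real.sqrt (b ^ 2 - c ^ 2) := by
  have hb : 0 < b := hc.trans_lt hbc
  -- step 1: rewrite integrand
  have step1 : ∫ x in Ioi (0 : ℝ), Real.exp (-c * x) * K0 (b * x)
      = ∫ x in Ioi (0 : ℝ), ∫ t in Ioi (0 : ℝ),
          Real.exp (-((c + b * Real.cosh t) * x)) := by
    refine setIntegral_congr_fun measurableSet_Ioi (fun x hx => ?_)
    rw [K0, ← integral_const_mul]
    refine setIntegral_congr_fun measurableSet_Ioi (fun t _ => ?_)
    rw [← Real.exp_add]
    congr 1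
    ring
  rw [step1]
  -- Fubini
  have hmeas : Continuous (fun p : ℝ × ℝ => Real.exp (-((c + b * Real.cosh p.2) * p.1))) := by
    fun_prop
  have hint : Integrable (fun p : ℝ × ℝ => Real.exp (-((c + b * Real.cosh p.2) * p.1)))
      ((volume.restrict (Ioi 0)).prod (volume.restrict (Ioi 0))) := by
    rw [integrable_prod_iff' hmeas.aestronglyMeasurable]
    constructor
    · refine Eventually.of_forall (fun t => ?_)
      have h := exp_neg_integrableOn_Ioi 0 (pos_denom hc hb t)
      exact h.congr_fun (fun x _ => by simp only [neg_mul]) measurableSet_Ioi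
    · have heq : (fun t => ∫ x in Ioi (0:ℝ),
          ‖Real.exp (-((c + b * Real.cosh t) * x))‖) = fun t => (c + b * Real.cosh t)⁻¹ := by
        funext t
        rw [← int_exp (pos_denom hc hb t)]
        refine setIntegral_congr_fun measurableSet_Ioi (fun x _ => ?_)
        rw [Real.norm_eq_abs, abs_of_pos (Real.exp_pos _)]
      rw [heq]
      exact inv_int hc hbc
  have hswap := integral_integral_swap
    (f := fun x t => Real.exp (-((c + b * Real.cosh t) * x))) hint
  rw [hswap]
  have step2 : ∫ t in Ioi (0 : ℝ), ∫ x in Ioi (0 : ℝ),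
      Real.exp (-((c + b * Real.cosh t) * x))
      = ∫ t in Ioi (0 : ℝ), (c + b * Real.cosh t)⁻¹ := by
    refine setIntegral_congr_fun measurableSet_Ioi (fun t _ => ?_)
    exact int_exp (pos_denom hc hb t)
  rw [step2]
  exact key_integral hc hbc
end

section
/- For every y ∈ ℝ and every v ∈ ℝ, with b = √(1 + v²/4) and c = v/2, the integral (1/(2π)) ∫_{-∞}^{∞} K₀(b·√(ξ² + y²)) e^{-cξ} dξ converges and equals e^{-|y|}/2. -/
open Real Filter Set MeasureTheory

namespace Stmt6Aux

/-- Integrability of the basic integrand `e^{-(s + r²/(4s))}/√s` on `(0,∞)`. -/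
lemma integrableOn_I (r : ℝ) :
    IntegrableOn (fun s : ℝ => Real.exp (-(s + r ^ 2 / (4 * s))) / Real.sqrt s) (Ioi 0) := by
  apply (Real.GammaIntegral_convergent one_half_pos).mono'
  · apply Measurable.aestronglyMeasurable
    fun_prop
  · filter_upwards [ae_restrict_mem measurableSet_Ioi] with s hs
    have hs0 : (0:ℝ) < s := hs
    have h1 : Real.exp (-(s + r ^ 2 / (4 * s))) ≤ Real.exp (-s) := by
      apply Real.exp_le_exp.2
      have : 0 ≤ r ^ 2 / (4 * s) := by positivity
      linarith
    have h2 : s ^ ((1:ℝ)/2 - 1) * Real.sqrt s = 1 := by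
      rw [Real.sqrt_eq_rpow, ← Real.rpow_add hs0]
      norm_num
    rw [Real.norm_eq_abs, abs_of_nonneg (by positivity),
      div_le_iff₀ (Real.sqrt_pos.2 hs0), mul_assoc, h2, mul_one]
    exact h1

/-- Integrability of `e^{-(s + r²/(4s))}/s` on `(0,∞)` for `r > 0`. -/
lemma integrableOn_G {r : ℝ} (hr : 0 < r) :
    IntegrableOn (fun s : ℝ => Real.exp (-(s + r ^ 2 / (4 * s))) / s) (Ioi 0) := by
  apply ((exp_neg_integrableOn_Ioi 0 one_pos).const_mul (4 / r ^ 2)).mono'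
  · apply Measurable.aestronglyMeasurable
    fun_prop
  · filter_upwards [ae_restrict_mem measurableSet_Ioi] with s hs
    have hs0 : (0:ℝ) < s := hs
    rw [Real.norm_eq_abs, abs_of_nonneg (by positivity)]
    have key : Real.exp (-(r ^ 2 / (4 * s))) / s ≤ 4 / r ^ 2 := by
      have hx : r ^ 2 / (4 * s) ≤ Real.exp (r ^ 2 / (4 * s)) := by
        have := Real.add_one_le_exp (r ^ 2 / (4 * s))
        linarith
      rw [Real.exp_neg, div_le_div_iff₀ (by positivity) (by positivity)]
      calc (Real.exp (r ^ 2 / (4 * s)))⁻¹ * r ^ 2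
          ≤ (r ^ 2 / (4 * s))⁻¹ * r ^ 2 := by
            apply mul_le_mul_of_nonneg_right _ (by positivity)
            exact inv_anti₀ (by positivity) hx
        _ = 4 * s := by field_simp
    calc Real.exp (-(s + r ^ 2 / (4 * s))) / s
        = Real.exp (-s) * (Real.exp (-(r ^ 2 / (4 * s))) / s) := by
          rw [neg_add, Real.exp_add, mul_div_assoc]
      _ ≤ Real.exp (-s) * (4 / r ^ 2) := by
          apply mul_le_mul_of_nonneg_left key (Real.exp_nonneg _)
      _ = 4 / r ^ 2 * Real.exp (-(1 : ℝ) * s) := by rw [neg_one_mul]; ring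


/-- The reflection `s ↦ r²/(4s)` on `(0,∞)`: integrability of the `J` integrand and
the relation `I = (r/2) J`. -/
lemma reflection {r : ℝ} (hr : 0 < r) :
    IntegrableOn (fun s : ℝ => Real.exp (-(s + r ^ 2 / (4 * s))) / (s * Real.sqrt s)) (Ioi 0) ∧
    (∫ s in Ioi (0:ℝ), Real.exp (-(s + r ^ 2 / (4 * s))) / Real.sqrt s) =
      (r / 2) * ∫ s in Ioi (0:ℝ), Real.exp (-(s + r ^ 2 / (4 * s))) / (s * Real.sqrt s) := by
  set f : ℝ → ℝ := fun s => r ^ 2 / (4 * s) with hf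
  set g : ℝ → ℝ := fun s => Real.exp (-(s + r ^ 2 / (4 * s))) / Real.sqrt s with hg
  have himg : f '' Ioi 0 = Ioi 0 := by
    ext z
    constructor
    · rintro ⟨x, hx, rfl⟩
      have hx0 : (0:ℝ) < x := hx
      exact mem_Ioi.2 (by positivity)
    · intro hz
      have hz0 : (0:ℝ) < z := hz
      refine ⟨r ^ 2 / (4 * z), mem_Ioi.2 (by positivity), ?_⟩
      show r ^ 2 / (4 * (r ^ 2 / (4 * z))) = z
      field_simp
  have hder : ∀ x ∈ Ioi (0:ℝ), HasDerivWithinAt f (-(r ^ 2) * (4 * x ^ 2)⁻¹) (Ioi 0) x := by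
    intro x hx
    have hx0 : (0:ℝ) < x := hx
    have h1 : HasDerivAt (fun s : ℝ => r ^ 2 / 4 * s⁻¹) (r ^ 2 / 4 * (-(x ^ 2)⁻¹)) x :=
      (hasDerivAt_inv hx0.ne').const_mul _
    have h2 : (fun s : ℝ => r ^ 2 / 4 * s⁻¹) = f := by
      funext s; rw [hf]; ring
    rw [h2] at h1
    rw [show (-(r ^ 2) * (4 * x ^ 2)⁻¹) = r ^ 2 / 4 * -(x ^ 2)⁻¹ by ring]
    exact h1.hasDerivWithinAt
  have hinj : InjOn f (Ioi 0) := by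
    intro a ha b hb h
    have ha0 : (0:ℝ) < a := ha
    have hb0 : (0:ℝ) < b := hb
    have h' : r ^ 2 * (4 * b) = r ^ 2 * (4 * a) := by
      rw [hf] at h
      exact (div_eq_div_iff (by positivity) (by positivity)).1 h
    have := mul_left_cancel₀ (by positivity : (r:ℝ) ^ 2 ≠ 0) h'
    linarith
  have key : ∀ x ∈ Ioi (0:ℝ),
      |(-(r ^ 2) * (4 * x ^ 2)⁻¹)| • g (f x)
        = (r / 2) * (Real.exp (-(x + r ^ 2 / (4 * x))) / (x * Real.sqrt x)) := by
    intro x hx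
    have hx0 : (0:ℝ) < x := hx
    obtain ⟨u, hu, rfl⟩ : ∃ u : ℝ, 0 < u ∧ u ^ 2 = x :=
      ⟨Real.sqrt x, Real.sqrt_pos.2 hx0, Real.sq_sqrt hx0.le⟩
    have hsu : Real.sqrt (u ^ 2) = u := Real.sqrt_sq hu.le
    have h1 : f (u ^ 2) = (r / (2 * u)) ^ 2 := by
      rw [hf]; simp only []; rw [div_pow, mul_pow]; norm_num
    have h2 : Real.sqrt (f (u ^ 2)) = r / (2 * u) := by
      rw [h1]; exact Real.sqrt_sq (by positivity)
    have h3 : f (u ^ 2) + r ^ 2 / (4 * f (u ^ 2)) = u ^ 2 + r ^ 2 / (4 * u ^ 2) := by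
      rw [hf]; simp only []; field_simp; ring
    rw [smul_eq_mul, hg]
    simp only []
    rw [h2, h3, hsu]
    rw [neg_mul, abs_neg, abs_of_nonneg (by positivity)]
    field_simp
    ring
  have habs : ∀ x ∈ Ioi (0:ℝ),
      (2 / r) * (|(-(r ^ 2) * (4 * x ^ 2)⁻¹)| • g (f x))
        = Real.exp (-(x + r ^ 2 / (4 * x))) / (x * Real.sqrt x) := by
    intro x hx
    have h1 : (2 / r) * (r / 2) = 1 := by field_simp
    rw [key x hx, ← mul_assoc, h1, one_mul]
  constructor
  · have h0 : IntegrableOn (fun x => |(-(r ^ 2) * (4 * x ^ 2)⁻¹)| • g (f x)) (Ioi 0) :=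
      (integrableOn_image_iff_integrableOn_abs_deriv_smul measurableSet_Ioi hder hinj g).1
        (by rw [himg]; exact integrableOn_I r)
    have h1 : IntegrableOn (fun x => (2 / r) * (|(-(r ^ 2) * (4 * x ^ 2)⁻¹)| • g (f x))) (Ioi 0) :=
      h0.const_mul _
    exact h1.congr_fun habs measurableSet_Ioi
  · have h0 := integral_image_eq_integral_abs_deriv_smul measurableSet_Ioi hder hinj g
    rw [himg] at h0
    calc (∫ s in Ioi (0:ℝ), Real.exp (-(s + r ^ 2 / (4 * s))) / Real.sqrt s)
        = ∫ x in Ioi (0:ℝ), |(-(r ^ 2) * (4 * x ^ 2)⁻¹)| • g (f x) := h0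
      _ = ∫ x in Ioi (0:ℝ), (r / 2) * (Real.exp (-(x + r ^ 2 / (4 * x))) / (x * Real.sqrt x)) :=
          setIntegral_congr_fun measurableSet_Ioi key
      _ = (r / 2) * ∫ s in Ioi (0:ℝ), Real.exp (-(s + r ^ 2 / (4 * s))) / (s * Real.sqrt s) :=
          integral_const_mul _ _

/-- Key integral: `∫₀^∞ e^{-(s + r²/(4s))}/√s ds = √π e^{-r}` for `r ≥ 0`. -/
lemma lemA {r : ℝ} (hr : 0 ≤ r) :
    (∫ s in Ioi (0:ℝ), Real.exp (-(s + r ^ 2 / (4 * s))) / Real.sqrt s)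
      = Real.sqrt π * Real.exp (-r) := by
  rcases hr.eq_or_lt with h0 | hr
  · -- case r = 0
    subst h0
    have hcong : ∀ s ∈ Ioi (0:ℝ),
        Real.exp (-(s + (0:ℝ) ^ 2 / (4 * s))) / Real.sqrt s
          = Real.exp (-s) * s ^ ((1:ℝ)/2 - 1) := by
      intro s hs
      have hs0 : (0:ℝ) < s := hs
      rw [show ((1:ℝ)/2 - 1) = -(1/2) by norm_num, Real.rpow_neg hs0.le,
        ← Real.sqrt_eq_rpow, zero_pow (by norm_num), zero_div, add_zero,
        div_eq_mul_inv]
    rw [setIntegral_congr_fun measurableSet_Ioi hcong, ← Real.Gamma_eq_integral one_half_pos,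
      Real.Gamma_one_half_eq, neg_zero, Real.exp_zero, mul_one]
  · -- case r > 0
    set φ : ℝ → ℝ := fun s => Real.sqrt s - r / 2 * (Real.sqrt s)⁻¹ with hφ
    set φ' : ℝ → ℝ := fun x =>
      1 / (2 * Real.sqrt x) - r / 2 * (-(1 / (2 * Real.sqrt x)) / Real.sqrt x ^ 2) with hφ'
    have hder : ∀ x ∈ Ioi (0:ℝ), HasDerivWithinAt φ (φ' x) (Ioi 0) x := by
      intro x hx
      have hx0 : (0:ℝ) < x := hx
      have h1 : HasDerivAt Real.sqrt (1 / (2 * Real.sqrt x)) x := Real.hasDerivAt_sqrt hx0.ne'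
      have h2 : HasDerivAt (fun s => r / 2 * (Real.sqrt s)⁻¹)
          (r / 2 * (-(1 / (2 * Real.sqrt x)) / Real.sqrt x ^ 2)) x :=
        (h1.inv (Real.sqrt_ne_zero'.2 hx0)).const_mul _
      exact (h1.sub h2).hasDerivWithinAt
    have hinj : InjOn φ (Ioi 0) := by
      apply StrictMonoOn.injOn
      intro a ha b hb hab
      have ha0 : (0:ℝ) < a := ha
      have hb0 : (0:ℝ) < b := hb
      have h1 : Real.sqrt a < Real.sqrt b := Real.sqrt_lt_sqrt ha0.le hab
      have ha' : (0:ℝ) < Real.sqrt a := Real.sqrt_pos.2 ha0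
      have h2 : r / 2 * (Real.sqrt b)⁻¹ ≤ r / 2 * (Real.sqrt a)⁻¹ := by
        gcongr
      simp only [hφ]
      linarith
    have himg : φ '' Ioi 0 = univ := by
      apply eq_univ_of_forall
      intro u
      set d : ℝ := Real.sqrt (u ^ 2 + 2 * r) with hd
      have hd2 : d ^ 2 = u ^ 2 + 2 * r := Real.sq_sqrt (by positivity)
      have hud : |u| < d := by
        rw [← Real.sqrt_sq_eq_abs, hd]
        exact Real.sqrt_lt_sqrt (sq_nonneg u) (by linarith)
      have hw0 : (0:ℝ) < (u + d) / 2 := by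
        have := neg_abs_le u
        linarith
      set w : ℝ := (u + d) / 2 with hw
      have h2w : 2 * w ^ 2 - r = 2 * u * w := by
        rw [hw]
        linear_combination hd2 / 2
      refine ⟨w ^ 2, mem_Ioi.2 (by positivity), ?_⟩
      simp only [hφ]
      rw [Real.sqrt_sq hw0.le]
      field_simp
      linear_combination h2w
    have h0 := integral_image_eq_integral_abs_deriv_smul measurableSet_Ioi hder hinj
      (fun u => Real.exp (-(u ^ 2 + r)))
    rw [himg] at h0
    have hLHS : (∫ x in (univ : Set ℝ), Real.exp (-(x ^ 2 + r)))
        = Real.sqrt π * Real.exp (-r) := by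
      rw [setIntegral_univ]
      have : (fun x : ℝ => Real.exp (-(x ^ 2 + r)))
          = fun x : ℝ => Real.exp (-r) * Real.exp (-1 * x ^ 2) := by
        funext x
        rw [← Real.exp_add]
        ring_nf
      rw [this, integral_const_mul, integral_gaussian, div_one, mul_comm]
    have hkey : ∀ x ∈ Ioi (0:ℝ),
        |φ' x| • Real.exp (-(φ x ^ 2 + r))
          = 1 / 2 * (Real.exp (-(x + r ^ 2 / (4 * x))) / Real.sqrt x)
            + r / 4 * (Real.exp (-(x + r ^ 2 / (4 * x))) / (x * Real.sqrt x)) := by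
      intro x hx
      have hx0 : (0:ℝ) < x := hx
      obtain ⟨u, hu, rfl⟩ : ∃ u : ℝ, 0 < u ∧ u ^ 2 = x :=
        ⟨Real.sqrt x, Real.sqrt_pos.2 hx0, Real.sq_sqrt hx0.le⟩
      have hsu : Real.sqrt (u ^ 2) = u := Real.sqrt_sq hu.le
      simp only [hφ, hφ', smul_eq_mul, hsu]
      have he : (u - r / 2 * u⁻¹) ^ 2 + r = u ^ 2 + r ^ 2 / (4 * u ^ 2) := by
        field_simp
        ring
      have hd : 1 / (2 * u) - r / 2 * (-(1 / (2 * u)) / u ^ 2)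
          = 1 / (2 * u) + r / (4 * u ^ 3) := by
        field_simp
        ring
      rw [he, hd, abs_of_nonneg (by positivity)]
      field_simp
    rw [setIntegral_congr_fun measurableSet_Ioi hkey] at h0
    have hadd :
        (∫ x in Ioi (0:ℝ),
            (1 / 2 * (Real.exp (-(x + r ^ 2 / (4 * x))) / Real.sqrt x)
              + r / 4 * (Real.exp (-(x + r ^ 2 / (4 * x))) / (x * Real.sqrt x))))
          = 1 / 2 * (∫ s in Ioi (0:ℝ), Real.exp (-(s + r ^ 2 / (4 * s))) / Real.sqrt s)
            + r / 4 * ∫ s in Ioi (0:ℝ),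
                Real.exp (-(s + r ^ 2 / (4 * s))) / (s * Real.sqrt s) := by
      rw [integral_add ((integrableOn_I r).const_mul _) ((reflection hr).1.const_mul _),
        integral_const_mul, integral_const_mul]
    rw [hadd] at h0
    have hrel := (reflection hr).2
    set I := ∫ s in Ioi (0:ℝ), Real.exp (-(s + r ^ 2 / (4 * s))) / Real.sqrt s
    set J := ∫ s in Ioi (0:ℝ), Real.exp (-(s + r ^ 2 / (4 * s))) / (s * Real.sqrt s)
    rw [setIntegral_univ] at h0 hLHS
    have : r / 4 * J = 1 / 2 * I := by rw [hrel]; ring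
    linarith [h0, hLHS]

/-- Change of variables `t ↦ (r/2)eᵗ` : full-line cosh integral equals the `1/s` integral. -/
lemma rep {r : ℝ} (hr : 0 < r) :
    Integrable (fun t : ℝ => Real.exp (-r * Real.cosh t)) ∧
    (∫ t : ℝ, Real.exp (-r * Real.cosh t))
      = ∫ s in Ioi (0:ℝ), Real.exp (-(s + r ^ 2 / (4 * s))) / s := by
  set f : ℝ → ℝ := fun t => r / 2 * Real.exp t with hf
  set g : ℝ → ℝ := fun s => Real.exp (-(s + r ^ 2 / (4 * s))) / s with hg
  have hder : ∀ x ∈ (univ : Set ℝ), HasDerivWithinAt f (r / 2 * Real.exp x) univ x := by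
    intro x _
    exact ((Real.hasDerivAt_exp x).const_mul (r / 2)).hasDerivWithinAt
  have hinj : InjOn f univ := by
    intro a _ b _ h
    have := mul_left_cancel₀ (by positivity : (r:ℝ) / 2 ≠ 0) h
    exact Real.exp_injective this
  have himg : f '' univ = Ioi 0 := by
    rw [image_univ]
    ext z
    constructor
    · rintro ⟨t, rfl⟩
      exact mem_Ioi.2 (by positivity)
    · intro hz
      have hz0 : (0:ℝ) < z := hz
      refine ⟨Real.log (2 * z / r), ?_⟩
      show r / 2 * Real.exp (Real.log (2 * z / r)) = z
      rw [Real.exp_log (by positivity)]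
      field_simp
  have hkey : ∀ t ∈ (univ : Set ℝ),
      |r / 2 * Real.exp t| • g (f t) = Real.exp (-r * Real.cosh t) := by
    intro t _
    have hft : (0:ℝ) < f t := by rw [hf]; positivity
    have he : f t + r ^ 2 / (4 * f t) = r * Real.cosh t := by
      rw [hf, Real.cosh_eq, Real.exp_neg]
      have h1 : Real.exp t ≠ 0 := (Real.exp_pos t).ne'
      field_simp
      ring
    rw [smul_eq_mul, hg]
    simp only []
    rw [he, abs_of_nonneg (by positivity), neg_mul]
    rw [mul_div_cancel₀ _ (by positivity : r / 2 * Real.exp t ≠ 0)]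
  have hint : Integrable (fun t : ℝ => Real.exp (-r * Real.cosh t)) := by
    have h0 : IntegrableOn (fun t => |r / 2 * Real.exp t| • g (f t)) univ :=
      (integrableOn_image_iff_integrableOn_abs_deriv_smul MeasurableSet.univ hder hinj g).1
        (by rw [himg]; exact integrableOn_G hr)
    rw [← integrableOn_univ]
    exact h0.congr_fun hkey MeasurableSet.univ
  refine ⟨hint, ?_⟩
  have h0 := integral_image_eq_integral_abs_deriv_smul MeasurableSet.univ hder hinj g
  rw [himg, setIntegral_congr_fun MeasurableSet.univ hkey, setIntegral_univ] at h0
  exact h0.symm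

/-- For `r > 0`, `2 K₀(r) = ∫₀^∞ e^{-(s + r²/(4s))}/s ds`. -/
lemma twoK0 {r : ℝ} (hr : 0 < r) :
    2 * K0 r = ∫ s in Ioi (0:ℝ), Real.exp (-(s + r ^ 2 / (4 * s))) / s := by
  obtain ⟨hint, heq⟩ := rep hr
  rw [← heq]
  have hsplit := intervalIntegral.integral_Iic_add_Ioi (b := (0:ℝ)) hint.integrableOn hint.integrableOn
  have hrefl : (∫ t in Iic (0:ℝ), Real.exp (-r * Real.cosh t))
      = ∫ t in Ioi (0:ℝ), Real.exp (-r * Real.cosh t) := by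
    have h2 := integral_comp_neg_Ioi (c := (0:ℝ)) (f := fun t => Real.exp (-r * Real.cosh t))
    rw [neg_zero] at h2
    rw [← h2]
    congr 1
    funext t
    rw [Real.cosh_neg]
  rw [hrefl] at hsplit
  rw [K0]
  linarith

/-- Gaussian integral with a linear term. -/
lemma gaussLin {α : ℝ} (hα : 0 < α) (m : ℝ) :
    Integrable (fun x : ℝ => Real.exp (-(α * x ^ 2 + m * x))) ∧
    (∫ x : ℝ, Real.exp (-(α * x ^ 2 + m * x)))
      = Real.sqrt (π / α) * Real.exp (m ^ 2 / (4 * α)) := by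
  have hfun : (fun x : ℝ => Real.exp (-(α * x ^ 2 + m * x)))
      = fun x : ℝ => Real.exp (m ^ 2 / (4 * α)) * Real.exp (-α * (x + m / (2 * α)) ^ 2) := by
    funext x
    rw [← Real.exp_add]
    congr 1
    field_simp
    ring
  constructor
  · rw [hfun]
    exact ((integrable_exp_neg_mul_sq hα).comp_add_right (m / (2 * α))).const_mul _
  · rw [hfun, integral_const_mul,
      integral_add_right_eq_self (fun x => Real.exp (-α * x ^ 2)) (m / (2 * α)),
      integral_gaussian, mul_comm]

/-- Scaled version of `lemA`. -/
lemma lemA' {b : ℝ} (hb : 0 < b) (y : ℝ) :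
    (∫ s in Ioi (0:ℝ), Real.exp (-(s / b ^ 2 + b ^ 2 * y ^ 2 / (4 * s))) / Real.sqrt s)
      = b * (Real.sqrt π * Real.exp (-|y|)) := by
  set g : ℝ → ℝ := fun u => Real.exp (-(u + y ^ 2 / (4 * u))) / Real.sqrt u with hg
  have hβ : (0:ℝ) < (b ^ 2)⁻¹ := by positivity
  have h1 := integral_comp_mul_left_Ioi g 0 hβ
  rw [mul_zero] at h1
  have hcong : ∀ s ∈ Ioi (0:ℝ),
      Real.exp (-(s / b ^ 2 + b ^ 2 * y ^ 2 / (4 * s))) / Real.sqrt s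
        = (1 / b) * g ((b ^ 2)⁻¹ * s) := by
    intro s hs
    have hs0 : (0:ℝ) < s := hs
    have hsqrt : Real.sqrt ((b ^ 2)⁻¹ * s) = b⁻¹ * Real.sqrt s := by
      rw [Real.sqrt_mul (by positivity), Real.sqrt_inv, Real.sqrt_sq hb.le]
    have hexp : (b ^ 2)⁻¹ * s + y ^ 2 / (4 * ((b ^ 2)⁻¹ * s))
        = s / b ^ 2 + b ^ 2 * y ^ 2 / (4 * s) := by
      field_simp
    rw [hg]
    simp only []
    rw [hsqrt, hexp]
    have hss : (0:ℝ) < Real.sqrt s := Real.sqrt_pos.2 hs0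
    field_simp
  rw [setIntegral_congr_fun measurableSet_Ioi hcong, integral_const_mul, h1]
  have h2 : (∫ u in Ioi (0:ℝ), g u) = Real.sqrt π * Real.exp (-|y|) := by
    have := lemA (abs_nonneg y)
    rw [hg]
    rw [← this]
    congr 1
    funext u
    rw [sq_abs]
  rw [smul_eq_mul, h2, inv_inv]
  field_simp

/-- Integrability of the scaled integrand. -/
lemma integrableOn_I2 {b : ℝ} (hb : 0 < b) (y : ℝ) :
    IntegrableOn
      (fun s : ℝ => Real.exp (-(s / b ^ 2 + b ^ 2 * y ^ 2 / (4 * s))) / Real.sqrt s) (Ioi 0) := by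
  have hβ : (0:ℝ) < (b ^ 2)⁻¹ := by positivity
  apply (integrableOn_rpow_mul_exp_neg_mul_rpow (p := 1) (s := -(1/2))
    (by norm_num) one_pos hβ).mono'
  · apply Measurable.aestronglyMeasurable
    fun_prop
  · filter_upwards [ae_restrict_mem measurableSet_Ioi] with s hs
    have hs0 : (0:ℝ) < s := hs
    have h1 : Real.exp (-(s / b ^ 2 + b ^ 2 * y ^ 2 / (4 * s))) ≤ Real.exp (-(b ^ 2)⁻¹ * s ^ (1:ℝ)) := by
      apply Real.exp_le_exp.2
      rw [Real.rpow_one]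
      have h2 : 0 ≤ b ^ 2 * y ^ 2 / (4 * s) := by positivity
      have h3 : s / b ^ 2 = (b ^ 2)⁻¹ * s := by field_simp
      linarith [h3.ge]
    have h2 : s ^ (-((1:ℝ)/2)) * Real.sqrt s = 1 := by
      rw [Real.sqrt_eq_rpow, ← Real.rpow_add hs0]
      norm_num
    rw [Real.norm_eq_abs, abs_of_nonneg (by positivity),
      div_le_iff₀ (Real.sqrt_pos.2 hs0), mul_right_comm, h2, one_mul]
    exact h1

end Stmt6Aux

open Stmt6Aux

/-- for all `y, v`, with `b = √(1 + v²/4)` and `c = v/2`,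
`(1/(2π)) ∫_ℝ K₀(b √(ξ² + y²)) e^{-cξ} dξ = e^{-|y|}/2`, the integral being convergent. -/
theorem stmt_6 (y v : ℝ) :
    Integrable
      (fun ξ : ℝ =>
        K0 (Real.sqrt (1 + v ^ 2 / 4) * Real.sqrt (ξ ^ 2 + y ^ 2)) *
          Real.exp (-(v / 2) * ξ)) ∧
    (1 / (2 * π)) *
        ∫ ξ : ℝ,
          K0 (Real.sqrt (1 + v ^ 2 / 4) * Real.sqrt (ξ ^ 2 + y ^ 2)) *
            Real.exp (-(v / 2) * ξ)
      = Real.exp (-|y|) / 2 := by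
  have hb1 : (0:ℝ) < 1 + v ^ 2 / 4 := by positivity
  set c : ℝ := v / 2 with hc
  set b : ℝ := Real.sqrt (1 + v ^ 2 / 4) with hbdef
  have hb0 : (0:ℝ) < b := Real.sqrt_pos.2 hb1
  have hb2 : b ^ 2 = 1 + c ^ 2 := by
    rw [hbdef, Real.sq_sqrt hb1.le, hc]; ring
  set μ : Measure ℝ := volume.restrict (Ioi 0) with hμ
  set f : ℝ → ℝ → ℝ := fun s ξ =>
    Real.exp (-(c * ξ)) * (Real.exp (-(s + b ^ 2 * (ξ ^ 2 + y ^ 2) / (4 * s))) / s) with hfdef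
  -- pointwise splitting of the integrand
  have hsplit : ∀ s : ℝ, 0 < s → ∀ ξ : ℝ,
      f s ξ = Real.exp (-(s + b ^ 2 * y ^ 2 / (4 * s))) / s
          * Real.exp (-(b ^ 2 / (4 * s) * ξ ^ 2 + c * ξ)) := by
    intro s hs ξ
    rw [hfdef]
    simp only []
    calc Real.exp (-(c * ξ)) * (Real.exp (-(s + b ^ 2 * (ξ ^ 2 + y ^ 2) / (4 * s))) / s)
        = Real.exp (-(c * ξ) + -(s + b ^ 2 * (ξ ^ 2 + y ^ 2) / (4 * s))) / s := by
          rw [Real.exp_add]; ring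
      _ = Real.exp (-(s + b ^ 2 * y ^ 2 / (4 * s)) + -(b ^ 2 / (4 * s) * ξ ^ 2 + c * ξ)) / s := by
          congr 1
          rw [Real.exp_eq_exp]
          field_simp
          ring
      _ = Real.exp (-(s + b ^ 2 * y ^ 2 / (4 * s))) / s
            * Real.exp (-(b ^ 2 / (4 * s) * ξ ^ 2 + c * ξ)) := by
          rw [Real.exp_add]; ring
  -- Gaussian integral in ξ for fixed s
  have hgv : ∀ s : ℝ, 0 < s →
      (∫ ξ : ℝ, Real.exp (-(b ^ 2 / (4 * s) * ξ ^ 2 + c * ξ)))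
        = 2 * Real.sqrt s * Real.sqrt π / b * Real.exp (c ^ 2 * s / b ^ 2) := by
    intro s hs
    have hα : (0:ℝ) < b ^ 2 / (4 * s) := by positivity
    rw [(gaussLin hα c).2]
    have h1 : π / (b ^ 2 / (4 * s)) = (2 * Real.sqrt s * Real.sqrt π / b) ^ 2 := by
      rw [div_pow, mul_pow, mul_pow, Real.sq_sqrt hs.le, Real.sq_sqrt Real.pi_pos.le]
      field_simp
      ring
    have h2 : c ^ 2 / (4 * (b ^ 2 / (4 * s))) = c ^ 2 * s / b ^ 2 := by
      field_simp
    rw [h1, Real.sqrt_sq (by positivity), h2]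
  -- value of the ξ-marginal
  have hmargval : ∀ s ∈ Ioi (0:ℝ),
      (∫ ξ : ℝ, f s ξ)
        = 2 * Real.sqrt π / b
            * (Real.exp (-(s / b ^ 2 + b ^ 2 * y ^ 2 / (4 * s))) / Real.sqrt s) := by
    intro s hs
    have hs0 : (0:ℝ) < s := hs
    have h0 : (fun ξ : ℝ => f s ξ) = fun ξ =>
        Real.exp (-(s + b ^ 2 * y ^ 2 / (4 * s))) / s
          * Real.exp (-(b ^ 2 / (4 * s) * ξ ^ 2 + c * ξ)) :=
      funext (hsplit s hs0)
    rw [h0, integral_const_mul, hgv s hs0]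
    obtain ⟨u, hu, rfl⟩ : ∃ u : ℝ, 0 < u ∧ u ^ 2 = s :=
      ⟨Real.sqrt s, Real.sqrt_pos.2 hs0, Real.sq_sqrt hs0.le⟩
    rw [Real.sqrt_sq hu.le]
    have h1c : (0:ℝ) < 1 + c ^ 2 := by positivity
    have hexp : Real.exp (-(u ^ 2 + b ^ 2 * y ^ 2 / (4 * u ^ 2))) * Real.exp (c ^ 2 * u ^ 2 / b ^ 2)
        = Real.exp (-(u ^ 2 / b ^ 2 + b ^ 2 * y ^ 2 / (4 * u ^ 2))) := by
      rw [← Real.exp_add, Real.exp_eq_exp, hb2]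
      field_simp
      ring
    rw [← hexp]
    field_simp
  -- measurability
  have hmeas : AEStronglyMeasurable (Function.uncurry f) (μ.prod (volume : Measure ℝ)) := by
    apply Measurable.aestronglyMeasurable
    have h0 : Function.uncurry f = fun p : ℝ × ℝ =>
        Real.exp (-(c * p.2)) * (Real.exp (-(p.1 + b ^ 2 * (p.2 ^ 2 + y ^ 2) / (4 * p.1))) / p.1) :=
      rfl
    rw [h0]
    fun_prop
  -- integrability on the product
  have hcond1 : ∀ᵐ s ∂μ, Integrable (fun ξ => Function.uncurry f (s, ξ)) volume := by
    rw [hμ]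
    filter_upwards [ae_restrict_mem measurableSet_Ioi] with s hs
    have hs0 : (0:ℝ) < s := hs
    have hα : (0:ℝ) < b ^ 2 / (4 * s) := by positivity
    have h0 : (fun ξ : ℝ => Function.uncurry f (s, ξ)) = fun ξ =>
        Real.exp (-(s + b ^ 2 * y ^ 2 / (4 * s))) / s
          * Real.exp (-(b ^ 2 / (4 * s) * ξ ^ 2 + c * ξ)) :=
      funext (hsplit s hs0)
    rw [h0]
    exact (gaussLin hα c).1.const_mul _
  have hcond2 : Integrable (fun s => ∫ ξ : ℝ, ‖Function.uncurry f (s, ξ)‖) μ := by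
    apply ((integrableOn_I2 hb0 y).const_mul (2 * Real.sqrt π / b)).congr
    filter_upwards [ae_restrict_mem measurableSet_Ioi] with s hs
    have hs0 : (0:ℝ) < s := hs
    have h0 : ∀ ξ : ℝ, ‖Function.uncurry f (s, ξ)‖ = f s ξ := by
      intro ξ
      have hfs : Function.uncurry f (s, ξ) = f s ξ := rfl
      rw [hfs, Real.norm_eq_abs, abs_of_nonneg]
      exact mul_nonneg (Real.exp_nonneg _) (div_nonneg (Real.exp_nonneg _) hs0.le)
    rw [← hmargval s hs]
    exact integral_congr_ae (Eventually.of_forall fun ξ => (h0 ξ).symm)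
  have hprod : Integrable (Function.uncurry f) (μ.prod (volume : Measure ℝ)) :=
    (integrable_prod_iff hmeas).2 ⟨hcond1, hcond2⟩
  -- a.e. positivity of ξ² + y²
  have haepos : ∀ᵐ ξ : ℝ, 0 < ξ ^ 2 + y ^ 2 := by
    rcases eq_or_ne y 0 with hy | hy
    · subst hy
      rw [ae_iff]
      refine measure_mono_null (fun ξ hξ => ?_) (measure_singleton (0:ℝ))
      simp only [mem_setOf_eq, not_lt] at hξ
      have h1 : ξ = 0 := by nlinarith [sq_nonneg ξ]
      simp [h1]
    · filter_upwards with ξ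
      have hy2 : (0:ℝ) < y ^ 2 := by positivity
      nlinarith [sq_nonneg ξ]
  -- marginal in s equals K0
  have hmarg : ∀ ξ : ℝ, 0 < ξ ^ 2 + y ^ 2 →
      (∫ s, f s ξ ∂μ) = Real.exp (-(c * ξ)) * (2 * K0 (b * Real.sqrt (ξ ^ 2 + y ^ 2))) := by
    intro ξ hpos
    have hr : 0 < b * Real.sqrt (ξ ^ 2 + y ^ 2) := mul_pos hb0 (Real.sqrt_pos.2 hpos)
    have h3 : ∀ s ∈ Ioi (0:ℝ), f s ξ = Real.exp (-(c * ξ)) *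
        (Real.exp (-(s + (b * Real.sqrt (ξ ^ 2 + y ^ 2)) ^ 2 / (4 * s))) / s) := by
      intro s hs
      rw [hfdef]
      simp only []
      rw [mul_pow, Real.sq_sqrt hpos.le]
    rw [hμ, setIntegral_congr_fun measurableSet_Ioi h3, integral_const_mul, ← twoK0 hr]
  -- relation between the target integrand and the marginal
  have htar : (fun ξ : ℝ => K0 (b * Real.sqrt (ξ ^ 2 + y ^ 2)) * Real.exp (-c * ξ))
      =ᵐ[(volume : Measure ℝ)] fun ξ => (1 / 2) * ∫ s, f s ξ ∂μ := by
    filter_upwards [haepos] with ξ h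
    rw [hmarg ξ h, show -c * ξ = -(c * ξ) from neg_mul c ξ]
    ring
  constructor
  · have hI := hprod.integral_prod_right
    have hI' : Integrable (fun ξ : ℝ => ∫ s, f s ξ ∂μ) volume := hI
    have hI2 : Integrable (fun ξ : ℝ => (1 / 2) * ∫ s, f s ξ ∂μ) volume := hI'.const_mul _
    exact hI2.congr htar.symm
  · have hval : (∫ ξ : ℝ, K0 (b * Real.sqrt (ξ ^ 2 + y ^ 2)) * Real.exp (-c * ξ))
        = π * Real.exp (-|y|) := by
      rw [integral_congr_ae htar, integral_const_mul]
      have hswap := integral_integral_swap (f := f) (μ := μ) (ν := (volume : Measure ℝ)) hprod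
      rw [← hswap, hμ, setIntegral_congr_fun measurableSet_Ioi hmargval, integral_const_mul,
        lemA' hb0 y]
      have hππ : Real.sqrt π * Real.sqrt π = π := Real.mul_self_sqrt Real.pi_pos.le
      field_simp
      linear_combination hππ
    rw [hval]
    have hπ : (π:ℝ) ≠ 0 := Real.pi_ne_zero
    field_simp
end

section
/- For every y ∈ ℝ, ∫₀^∞ t^{-1/2} exp(-t - y²/(4t)) dt = √π · e^{-|y|}. -/
open Real Filter Set MeasureTheory

lemma sq_image : (fun u : ℝ => u ^ 2) '' Ioi 0 = Ioi 0 := by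
  ext x
  constructor
  · rintro ⟨u, hu, rfl⟩; exact pow_pos (mem_Ioi.1 hu) 2
  · intro hx
    exact ⟨Real.sqrt x, Real.sqrt_pos.2 hx, Real.sq_sqrt hx.le⟩

lemma inv_image {a : ℝ} (ha : 0 < a) : (fun u : ℝ => a / u) '' Ioi 0 = Ioi 0 := by
  ext x
  constructor
  · rintro ⟨u, hu, rfl⟩; exact div_pos ha hu
  · intro hx
    exact ⟨a / x, div_pos ha hx, by field_simp⟩

lemma glasser_image {a : ℝ} (ha : 0 < a) :
    (fun u : ℝ => u - a / u) '' Ioi 0 = univ := by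
  ext s
  simp only [mem_univ, iff_true]
  set r := Real.sqrt (s ^ 2 + 4 * a) with hr
  have hr2 : r ^ 2 = s ^ 2 + 4 * a := Real.sq_sqrt (by positivity)
  have hrs : |s| < r := by
    rw [← Real.sqrt_sq_eq_abs]
    exact Real.sqrt_lt_sqrt (sq_nonneg s) (by linarith)
  have hu : (0:ℝ) < (s + r) / 2 := by
    have := neg_abs_le s
    have := abs_nonneg s
    linarith [hrs]
  refine ⟨(s + r) / 2, hu, ?_⟩
  have h2 : ((s + r) / 2) ^ 2 = s * ((s + r) / 2) + a := by ring_nf; nlinarith [hr2]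
  have hne := hu.ne'
  have hsr : s + r ≠ 0 := fun hc => hne (by rw [hc]; norm_num)
  have ha' : a = ((s + r) / 2) ^ 2 - s * ((s + r) / 2) := by linarith
  show (s + r) / 2 - a / ((s + r) / 2) = s
  rw [ha']
  field_simp
  ring

lemma glasser_inj {a : ℝ} (ha : 0 < a) :
    InjOn (fun u : ℝ => u - a / u) (Ioi 0) := by
  have : StrictMonoOn (fun u : ℝ => u - a / u) (Ioi 0) := by
    intro u hu v hv huv
    simp only
    have : a / v < a / u := div_lt_div_of_pos_left ha hu huv
    linarith
  exact this.injOn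

lemma key_glasser {a : ℝ} (ha : 0 < a) :
    (∫ u in Ioi (0:ℝ), Real.exp (-(u - a / u) ^ 2)) = Real.sqrt π / 2 := by
  set h : ℝ → ℝ := fun u => Real.exp (-(u - a / u) ^ 2) with hh
  -- integrability of h on Ioi 0
  have hmeas : Measurable h := by fun_prop
  have hint : IntegrableOn h (Ioi 0) := by
    refine Integrable.mono' (g := fun u => Real.exp (2 * a) * Real.exp (-u ^ 2)) ?_
      hmeas.aestronglyMeasurable.restrict ?_
    · exact (((integrable_exp_neg_mul_sq one_pos).const_mul (Real.exp (2 * a))).mono_measure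
        Measure.restrict_le_self).congr (by
          refine Filter.Eventually.of_forall fun x => ?_
          simp [neg_mul, one_mul])
    · filter_upwards [ae_restrict_mem measurableSet_Ioi] with u hu
      rw [Real.norm_eq_abs, abs_of_pos (Real.exp_pos _), ← Real.exp_add]
      apply Real.exp_le_exp.2
      have hu0 : (0:ℝ) < u := hu
      have : (u - a / u) ^ 2 = u ^ 2 - 2 * a + (a / u) ^ 2 := by
        field_simp; ring
      nlinarith [sq_nonneg (a / u)]
  -- substitution u ↦ a / u
  have hderiv : ∀ x ∈ Ioi (0:ℝ),
      HasDerivWithinAt (fun u : ℝ => a / u) (-(a / x ^ 2)) (Ioi 0) x := by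
    intro x hx
    have : HasDerivAt (fun u : ℝ => a / u) (a * (-(x ^ 2)⁻¹)) x := by
      simpa [div_eq_mul_inv] using (hasDerivAt_inv (ne_of_gt hx)).const_mul a
    exact (this.congr_deriv (by ring)).hasDerivWithinAt
  have hinj : InjOn (fun u : ℝ => a / u) (Ioi 0) := by
    intro u hu v hv huv
    have hu0 : (0:ℝ) < u := hu
    have hv0 : (0:ℝ) < v := hv
    field_simp at huv
    linarith
  have step1 : (∫ u in Ioi (0:ℝ), h u) = ∫ u in Ioi (0:ℝ), (a / u ^ 2) * h u := by
    conv_lhs => rw [← inv_image ha,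
      integral_image_eq_integral_abs_deriv_smul measurableSet_Ioi hderiv hinj h]
    refine setIntegral_congr_fun measurableSet_Ioi fun u hu => ?_
    have hu0 : (0:ℝ) < u := hu
    have : h (a / u) = h u := by
      simp only [hh]
      congr 1
      have : a / (a / u) = u := by field_simp
      rw [this]
      ring
    rw [this]
    simp only [smul_eq_mul]
    congr 1
    rw [abs_of_neg (neg_lt_zero.mpr (by positivity))]
    ring
  -- integrability of (a/u^2) * h u
  have hint2 : IntegrableOn (fun u => (a / u ^ 2) * h u) (Ioi 0) := by
    have := (integrableOn_image_iff_integrableOn_abs_deriv_smul measurableSet_Ioi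
      hderiv hinj h).1 (by rwa [inv_image ha])
    refine this.congr_fun (fun u hu => ?_) measurableSet_Ioi
    have hu0 : (0:ℝ) < u := hu
    have hfix : h (a / u) = h u := by
      simp only [hh]
      congr 1
      have : a / (a / u) = u := by field_simp
      rw [this]; ring
    simp only [smul_eq_mul, hfix]
    rw [abs_of_neg (neg_lt_zero.mpr (by positivity))]
    ring
  -- substitution s = u - a/u  gives the Gaussian integral
  have hderiv2 : ∀ x ∈ Ioi (0:ℝ),
      HasDerivWithinAt (fun u : ℝ => u - a / u) (1 + a / x ^ 2) (Ioi 0) x := by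
    intro x hx
    have h1 : HasDerivAt (fun u : ℝ => a / u) (a * (-(x ^ 2)⁻¹)) x := by
      simpa [div_eq_mul_inv] using (hasDerivAt_inv (ne_of_gt hx)).const_mul a
    have := (hasDerivAt_id x).sub h1
    exact (this.congr_deriv (by ring)).hasDerivWithinAt
  have gauss : (∫ s : ℝ, Real.exp (-s ^ 2)) = Real.sqrt π := by
    simpa using integral_gaussian 1
  have step2 : Real.sqrt π = ∫ u in Ioi (0:ℝ), (1 + a / u ^ 2) * h u := by
    have himg := integral_image_eq_integral_abs_deriv_smul measurableSet_Ioi hderiv2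
      (glasser_inj ha) (fun s => Real.exp (-s ^ 2))
    rw [glasser_image ha, setIntegral_univ] at himg
    rw [← gauss, himg]
    refine setIntegral_congr_fun measurableSet_Ioi fun u hu => ?_
    have hu0 : (0:ℝ) < u := hu
    simp only [smul_eq_mul, hh]
    rw [abs_of_pos (by positivity : (0:ℝ) < 1 + a / u ^ 2)]
  have split : (∫ u in Ioi (0:ℝ), (1 + a / u ^ 2) * h u)
      = (∫ u in Ioi (0:ℝ), h u) + ∫ u in Ioi (0:ℝ), (a / u ^ 2) * h u := by
    rw [← integral_add hint hint2]
    refine setIntegral_congr_fun measurableSet_Ioi fun u hu => ?_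
    ring
  have : Real.sqrt π = 2 * ∫ u in Ioi (0:ℝ), h u := by
    rw [step2, split, ← step1]; ring
  linarith [this]

/-- `∫₀^∞ t^{-1/2} exp (-t - y²/(4t)) dt = √π e^{-|y|}` for all real `y`. -/
theorem stmt_7 (y : ℝ) :
    ∫ t in Ioi (0 : ℝ), (Real.sqrt t)⁻¹ * Real.exp (-t - y ^ 2 / (4 * t))
      = Real.sqrt π * Real.exp (-|y|) := by
  rcases eq_or_ne y 0 with rfl | hy
  · have h := Real.Gamma_eq_integral (by norm_num : (0:ℝ) < 1 / 2)
    rw [Real.Gamma_one_half_eq] at h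
    simp only [abs_zero, neg_zero, Real.exp_zero, mul_one]
    rw [h]
    refine setIntegral_congr_fun measurableSet_Ioi fun t ht => ?_
    have ht0 : (0:ℝ) < t := ht
    rw [show (1:ℝ)/2 - 1 = -(1/2) by norm_num, Real.rpow_neg ht0.le,
      ← Real.sqrt_eq_rpow]
    ring_nf
  · set a : ℝ := |y| / 2 with ha_def
    have ha : 0 < a := by positivity
    have ha2 : a ^ 2 = y ^ 2 / 4 := by
      rw [ha_def]; rw [div_pow, sq_abs]; norm_num
    -- substitution t = u^2
    have hderiv : ∀ x ∈ Ioi (0:ℝ),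
        HasDerivWithinAt (fun u : ℝ => u ^ 2) (2 * x) (Ioi 0) x := by
      intro x hx
      simpa using (hasDerivAt_pow 2 x).hasDerivWithinAt
    have hinj : InjOn (fun u : ℝ => u ^ 2) (Ioi 0) := by
      intro u hu v hv huv
      have hu0 : (0:ℝ) < u := hu
      have hv0 : (0:ℝ) < v := hv
      simp only at huv
      have h0 : (u - v) * (u + v) = 0 := by nlinarith [huv]
      rcases mul_eq_zero.1 h0 with h | h
      · linarith
      · linarith
    rw [← sq_image, integral_image_eq_integral_abs_deriv_smul measurableSet_Ioi
      hderiv hinj (fun t => (Real.sqrt t)⁻¹ * Real.exp (-t - y ^ 2 / (4 * t)))]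
    have congr1 : ∀ u ∈ Ioi (0:ℝ),
        |2 * u| • ((Real.sqrt (u ^ 2))⁻¹ * Real.exp (-(u^2) - y ^ 2 / (4 * u^2)))
          = 2 * (Real.exp (-2 * a) * Real.exp (-(u - a / u) ^ 2)) := by
      intro u hu
      have hu0 : (0:ℝ) < u := hu
      rw [Real.sqrt_sq hu0.le, abs_of_pos (by positivity : (0:ℝ) < 2 * u),
        smul_eq_mul, ← Real.exp_add]
      have harg : -(u ^ 2) - y ^ 2 / (4 * u ^ 2) = -2 * a + -(u - a / u) ^ 2 := by
        have : y ^ 2 / (4 * u ^ 2) = a ^ 2 / u ^ 2 := by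
          rw [ha2]; ring
        rw [this]
        field_simp
        ring
      rw [harg]
      field_simp
    rw [setIntegral_congr_fun measurableSet_Ioi congr1]
    rw [integral_const_mul, integral_const_mul, key_glasser ha]
    rw [show -2 * a = -|y| by rw [ha_def]; ring]
    ring
end

section
/- For fixed v ∈ ℝ and fixed y ∈ ℝ, the function u(x, y) = (1/(2π)) ∫_x^∞ K₀(√(ξ² + y²)·√(1 + v²/4)) exp(-(v/2)ξ) dξ satisfies lim_{x → -∞} u(x, y) = e^{-|y|}/2. -/
open Real Filter Set MeasureTheory

/-- The travelling front profile. -/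
noncomputable def frontProfile (v x y : ℝ) : ℝ :=
  (1 / (2 * π)) *
    ∫ ξ in Ioi x,
      K0 (Real.sqrt (ξ ^ 2 + y ^ 2) * Real.sqrt (1 + v ^ 2 / 4)) *
        Real.exp (-(v / 2) * ξ)


lemma aux_integrable_gauss_lin (a β : ℝ) (ha : 0 < a) :
    Integrable (fun x : ℝ => Real.exp (-(a * x ^ 2) - β * x)) := by
  have h := (integrable_cexp_quadratic (b := (a : ℂ)) (by simpa using ha) (-β : ℂ) 0).norm
  refine h.congr (Eventually.of_forall fun x => ?_)
  have e : ((-a : ℂ) * x ^ 2 + (-β : ℂ) * x + 0) = ((-(a * x ^ 2) - β * x : ℝ) : ℂ) := by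
    push_cast; ring
  simp only [e, Complex.norm_exp, Complex.ofReal_re]

lemma aux_gauss_lin (a β : ℝ) (ha : 0 < a) :
    ∫ x : ℝ, Real.exp (-(a * x ^ 2) - β * x)
      = Real.sqrt (π / a) * Real.exp (β ^ 2 / (4 * a)) := by
  have h := integral_cexp_quadratic (b := (-a : ℂ)) (by simpa using ha) (-β : ℂ) 0
  have h1 : (∫ x : ℝ, Complex.exp ((-a : ℂ) * x ^ 2 + (-β : ℂ) * x + 0))
      = ((∫ x : ℝ, Real.exp (-(a * x ^ 2) - β * x) : ℝ) : ℂ) := by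
    rw [show (fun x : ℝ => Complex.exp ((-a : ℂ) * x ^ 2 + (-β : ℂ) * x + 0))
        = (fun x : ℝ => ((Real.exp (-(a * x ^ 2) - β * x) : ℝ) : ℂ)) from funext fun x => by
      rw [Complex.ofReal_exp]; congr 1; push_cast; ring]
    exact integral_ofReal
  rw [h1] at h
  have h2 : ((π : ℂ) / -(-a : ℂ)) ^ (1 / 2 : ℂ) * Complex.exp (0 - (-β : ℂ) ^ 2 / (4 * -a))
      = ((Real.sqrt (π / a) * Real.exp (β ^ 2 / (4 * a)) : ℝ) : ℂ) := by
    have e1 : ((π : ℂ) / -(-a : ℂ)) ^ (1 / 2 : ℂ) = ((Real.sqrt (π / a) : ℝ) : ℂ) := by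
      rw [neg_neg, show ((π : ℂ) / a) = ((π / a : ℝ) : ℂ) by push_cast; ring,
        show (1 / 2 : ℂ) = ((1 / 2 : ℝ) : ℂ) by norm_num,
        ← Complex.ofReal_cpow (by positivity), Real.sqrt_eq_rpow]
    have e2 : Complex.exp (0 - (-β : ℂ) ^ 2 / (4 * -a))
        = ((Real.exp (β ^ 2 / (4 * a)) : ℝ) : ℂ) := by
      rw [Complex.ofReal_exp]; congr 1; push_cast
      have ha' : (a : ℂ) ≠ 0 := Complex.ofReal_ne_zero.2 (ne_of_gt ha)
      field_simp
      ring
    rw [e1, e2, ← Complex.ofReal_mul]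
  rw [h2] at h
  exact_mod_cast h

lemma aux_integrableOn_rpow_exp (α : ℝ) (hα : 0 < α) :
    IntegrableOn (fun t : ℝ => (Real.sqrt t)⁻¹ * Real.exp (-(α * t))) (Ioi 0) := by
  have hm : Measurable (fun t : ℝ => (Real.sqrt t)⁻¹ * Real.exp (-(α * t))) :=
    (Real.continuous_sqrt.measurable.inv).mul ((measurable_id.const_mul α).neg.exp)
  rw [← Ioc_union_Ioi_eq_Ioi (zero_le_one' ℝ)]
  rw [integrableOn_union]
  constructor
  · have hb : IntegrableOn (fun t : ℝ => t ^ (-(1:ℝ)/2)) (Ioc (0:ℝ) 1) := by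
      have := intervalIntegral.intervalIntegrable_rpow' (r := -(1:ℝ)/2) (by norm_num) (a := 0) (b := 1)
      rwa [intervalIntegrable_iff_integrableOn_Ioc_of_le zero_le_one] at this
    refine Integrable.mono' hb hm.aestronglyMeasurable ?_
    filter_upwards [ae_restrict_mem measurableSet_Ioc] with t ht
    rw [Real.norm_eq_abs, abs_mul, abs_of_nonneg (inv_nonneg.2 (Real.sqrt_nonneg t)),
      abs_of_nonneg (le_of_lt (Real.exp_pos _))]
    calc (Real.sqrt t)⁻¹ * Real.exp (-(α * t)) ≤ (Real.sqrt t)⁻¹ * 1 := by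
          gcongr
          exact Real.exp_le_one_iff.2 (by nlinarith [ht.1])
      _ = t ^ (-(1:ℝ)/2) := by
          rw [mul_one, Real.sqrt_eq_rpow, ← Real.rpow_neg (le_of_lt ht.1)]
          norm_num
  · have hb : IntegrableOn (fun t : ℝ => Real.exp (-α * t)) (Ioi (1:ℝ)) :=
      exp_neg_integrableOn_Ioi 1 hα
    refine Integrable.mono' hb hm.aestronglyMeasurable ?_
    filter_upwards [ae_restrict_mem measurableSet_Ioi] with t ht
    rw [Real.norm_eq_abs, abs_mul, abs_of_nonneg (inv_nonneg.2 (Real.sqrt_nonneg t)),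
      abs_of_nonneg (le_of_lt (Real.exp_pos _))]
    have h1 : (1:ℝ) ≤ Real.sqrt t := by
      rw [show (1:ℝ) = Real.sqrt 1 from (Real.sqrt_one).symm]
      exact Real.sqrt_le_sqrt (le_of_lt ht)
    calc (Real.sqrt t)⁻¹ * Real.exp (-(α * t)) ≤ 1 * Real.exp (-(α * t)) := by
          gcongr
          exact (inv_le_one_iff₀ ..).2 (Or.inr h1)
      _ = Real.exp (-α * t) := by rw [one_mul, neg_mul]

lemma aux_integral_rpow_exp (α : ℝ) (hα : 0 < α) :
    ∫ t in Ioi (0:ℝ), (Real.sqrt t)⁻¹ * Real.exp (-(α * t)) = Real.sqrt (π / α) := by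
  have h := Real.integral_rpow_mul_exp_neg_mul_Ioi (a := 1/2) (r := α) (by norm_num) hα
  have h2 : ∀ t ∈ Ioi (0:ℝ), t ^ ((1:ℝ)/2 - 1) * Real.exp (-(α * t))
      = (Real.sqrt t)⁻¹ * Real.exp (-(α * t)) := by
    intro t ht
    congr 1
    rw [show (1:ℝ)/2 - 1 = -(1/2) by norm_num, Real.rpow_neg (le_of_lt ht),
      ← Real.sqrt_eq_rpow]
  rw [setIntegral_congr_fun measurableSet_Ioi h2] at h
  rw [h, Real.Gamma_one_half_eq, Real.sqrt_eq_rpow π, ← Real.mul_rpow (by positivity)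
    (le_of_lt Real.pi_pos), Real.sqrt_eq_rpow]
  congr 1
  field_simp

lemma aux_cosh_two (w : ℝ) : Real.cosh (2*w) = 1 + 2 * Real.sinh w ^ 2 := by
  rw [Real.cosh_two_mul, Real.cosh_sq]; ring

lemma aux_sq_le_sinh_sq (w : ℝ) : w ^ 2 ≤ Real.sinh w ^ 2 := by
  have h1 : |w| ≤ Real.sinh |w| := Real.self_le_sinh_iff.2 (abs_nonneg w)
  have h2 : Real.sinh |w| = |Real.sinh w| := by
    rcases le_or_gt 0 w with h | h
    · rw [abs_of_nonneg h, abs_of_nonneg (by simpa using Real.sinh_le_sinh.2 h)]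
    · rw [abs_of_neg h, Real.sinh_neg, abs_of_neg (by simpa using Real.sinh_lt_sinh.2 h)]
  calc w ^ 2 = |w| ^ 2 := (sq_abs w).symm
    _ ≤ Real.sinh |w| ^ 2 := pow_le_pow_left₀ (abs_nonneg w) h1 2
    _ = Real.sinh w ^ 2 := by rw [h2, sq_abs]

lemma aux_cosh_gauss (m : ℝ) (hm : 0 < m) :
    ∫ w : ℝ, Real.cosh w * Real.exp (-m * Real.cosh (2*w))
      = Real.exp (-m) * Real.sqrt (π/(2*m)) := by
  have h := integral_image_eq_integral_abs_deriv_smul MeasurableSet.univ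
    (fun w (_ : w ∈ univ) => (Real.hasDerivAt_sinh w).hasDerivWithinAt)
    (Real.sinh_injective.injOn) (fun z => Real.exp (-m * (1 + 2*z^2)))
  rw [image_univ, Real.sinh_surjective.range_eq, Measure.restrict_univ] at h
  have hL : ∫ (z : ℝ), Real.exp (-m * (1 + 2*z^2))
      = Real.exp (-m) * Real.sqrt (π/(2*m)) := by
    have : ∀ z : ℝ, Real.exp (-m * (1 + 2*z^2))
        = Real.exp (-m) * Real.exp (-(2*m) * z^2) := by
      intro z; rw [← Real.exp_add]; ring_nf
    rw [funext this, integral_const_mul, integral_gaussian]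
  have hR : ∀ w : ℝ, |Real.cosh w| • Real.exp (-m * (1 + 2 * Real.sinh w ^ 2))
      = Real.cosh w * Real.exp (-m * Real.cosh (2*w)) := by
    intro w
    rw [smul_eq_mul, abs_of_pos (Real.cosh_pos w), aux_cosh_two]
  rw [hL, funext hR] at h
  exact h.symm

lemma aux_expw_gauss (m : ℝ) (hm : 0 < m) :
    ∫ w : ℝ, Real.exp w * Real.exp (-m * Real.cosh (2*w))
      = Real.exp (-m) * Real.sqrt (π/(2*m)) := by
  set g : ℝ → ℝ := fun w => Real.exp w * Real.exp (-m * Real.cosh (2*w)) with hg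
  have hgmeas : Continuous g := by fun_prop
  have hint : Integrable g := by
    refine Integrable.mono' ((aux_integrable_gauss_lin (2*m) (-1) (by linarith)).const_mul
      (Real.exp (-m))) hgmeas.aestronglyMeasurable (Eventually.of_forall fun w => ?_)
    rw [Real.norm_eq_abs, hg]
    simp only
    rw [abs_of_pos (by positivity), ← Real.exp_add, ← Real.exp_add]
    apply Real.exp_le_exp.2
    have := aux_sq_le_sinh_sq w
    rw [aux_cosh_two]
    nlinarith
  have hneg : (fun w => g (-w)) = fun w => Real.exp (-w) * Real.exp (-m * Real.cosh (2*w)) := by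
    funext w
    rw [hg]
    simp only
    rw [show 2 * -w = -(2*w) by ring, Real.cosh_neg]
  have hgnegint : Integrable (fun w => g (-w)) := hint.comp_neg
  have e1 : ∫ w, g (-w) = ∫ w, g w := integral_neg_eq_self g volume
  have e2 : ∫ w, (g w + g (-w)) = (∫ w, g w) + ∫ w, g (-w) := integral_add hint hgnegint
  have e3 : (fun w => g w + g (-w))
      = fun w => 2 * (Real.cosh w * Real.exp (-m * Real.cosh (2*w))) := by
    funext w
    simp only [hg]
    rw [show (2:ℝ) * -w = -(2*w) by ring, Real.cosh_neg, Real.cosh_eq w]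
    ring
  have e4 : ∫ w, (g w + g (-w)) = 2 * ∫ w, Real.cosh w * Real.exp (-m * Real.cosh (2*w)) := by
    rw [e3, integral_const_mul]
  rw [aux_cosh_gauss m hm] at e4
  rw [e1] at e2
  have : ∫ w, g w = Real.exp (-m) * Real.sqrt (π/(2*m)) := by linarith [e2, e4]
  exact this

lemma aux_bessel_half (α β : ℝ) (hα : 0 < α) (hβ : 0 ≤ β) :
    ∫ t in Ioi (0:ℝ), (Real.sqrt t)⁻¹ * Real.exp (-(α*t) - β/t)
      = Real.sqrt (π/α) * Real.exp (-2 * Real.sqrt (α*β)) := by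
  rcases eq_or_lt_of_le hβ with hβ0 | hβpos
  · rw [← hβ0]
    simp only [zero_div, sub_zero, mul_zero, Real.sqrt_zero, mul_zero, neg_zero, Real.exp_zero,
      mul_one]
    exact aux_integral_rpow_exp α hα
  · set γ := Real.sqrt (β/α) with hγdef
    have hγpos : 0 < γ := Real.sqrt_pos.2 (by positivity)
    have hαγ : α * γ = Real.sqrt (α*β) := by
      have h1 : α * γ = Real.sqrt (α^2 * (β/α)) := by
        rw [Real.sqrt_mul (by positivity), Real.sqrt_sq hα.le, hγdef]
      rw [h1]
      congr 1
      field_simp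
    have hβγ : β / γ = Real.sqrt (α*β) := by
      have h1 : Real.sqrt (α*β) * γ = β := by
        rw [hγdef, ← Real.sqrt_mul (by positivity),
          show α * β * (β/α) = β^2 by field_simp, Real.sqrt_sq hβ]
      rw [div_eq_iff (ne_of_gt hγpos)]
      exact h1.symm
    set m := 2 * Real.sqrt (α*β) with hmdef
    have hmpos : 0 < m := by
      rw [hmdef]
      have : 0 < Real.sqrt (α*β) := Real.sqrt_pos.2 (by positivity)
      linarith
    -- change of variables t = γ * exp (2 w)
    have hderiv : ∀ w : ℝ, HasDerivAt (fun w : ℝ => γ * Real.exp (2*w))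
        (γ * (Real.exp (2*w) * 2)) w := by
      intro w
      simpa [Function.comp] using
        ((Real.hasDerivAt_exp (2*w)).comp w ((hasDerivAt_id w).const_mul 2)).const_mul γ
    have hinj : InjOn (fun w : ℝ => γ * Real.exp (2*w)) univ := by
      intro a _ b _ hab
      simp only at hab
      have := mul_left_cancel₀ (ne_of_gt hγpos) hab
      have := Real.exp_injective this
      linarith
    have himg : (fun w : ℝ => γ * Real.exp (2*w)) '' univ = Ioi 0 := by
      rw [image_univ]
      ext x
      simp only [mem_range, mem_Ioi]
      constructor
      · rintro ⟨w, rfl⟩; positivity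
      · intro hx
        exact ⟨Real.log (x/γ) / 2, by
          rw [show 2 * (Real.log (x/γ)/2) = Real.log (x/γ) by ring,
            Real.exp_log (by positivity), mul_div_cancel₀ _ (ne_of_gt hγpos)]⟩
    have h := integral_image_eq_integral_abs_deriv_smul MeasurableSet.univ
      (fun w (_ : w ∈ univ) => (hderiv w).hasDerivWithinAt) hinj
      (fun t => (Real.sqrt t)⁻¹ * Real.exp (-(α*t) - β/t))
    rw [himg, Measure.restrict_univ] at h
    rw [h]
    have hsimp : ∀ w : ℝ, |γ * (Real.exp (2*w) * 2)| •
        ((Real.sqrt (γ * Real.exp (2*w)))⁻¹ *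
          Real.exp (-(α*(γ * Real.exp (2*w))) - β/(γ * Real.exp (2*w))))
        = (2 * Real.sqrt γ) * (Real.exp w * Real.exp (-m * Real.cosh (2*w))) := by
      intro w
      have he2 : Real.exp (2*w) = Real.exp w ^ 2 := by
        rw [← Real.exp_nat_mul]; norm_num [mul_comm]
      have hsq : Real.sqrt (γ * Real.exp (2*w)) = Real.sqrt γ * Real.exp w := by
        rw [he2, Real.sqrt_mul hγpos.le, Real.sqrt_sq (Real.exp_pos w).le]
      have harg : -(α*(γ * Real.exp (2*w))) - β/(γ * Real.exp (2*w))
          = -m * Real.cosh (2*w) := by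
        have h1 : α*(γ * Real.exp (2*w)) = Real.sqrt (α*β) * Real.exp (2*w) := by
          rw [← hαγ]; ring
        have h2 : β/(γ * Real.exp (2*w)) = Real.sqrt (α*β) * Real.exp (-(2*w)) := by
          rw [div_mul_eq_div_div, hβγ, Real.exp_neg]
          ring
        rw [h1, h2, hmdef, Real.cosh_eq]
        ring
      have key : γ * (Real.sqrt γ)⁻¹ = Real.sqrt γ := by
        have hγs : Real.sqrt γ ≠ 0 := ne_of_gt (Real.sqrt_pos.2 hγpos)
        field_simp
        rw [Real.sq_sqrt hγpos.le]
      have key2 : (Real.exp w)^2 * (Real.exp w)⁻¹ = Real.exp w := by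
        rw [sq, mul_assoc, mul_inv_cancel₀ (Real.exp_ne_zero w), mul_one]
      rw [smul_eq_mul, abs_of_pos (by positivity), hsq, harg, mul_inv, he2]
      calc γ * (Real.exp w ^ 2 * 2) *
            ((Real.sqrt γ)⁻¹ * (Real.exp w)⁻¹ * Real.exp (-m * Real.cosh (2*w)))
          = (γ * (Real.sqrt γ)⁻¹) * ((Real.exp w)^2 * (Real.exp w)⁻¹) *
            (2 * Real.exp (-m * Real.cosh (2*w))) := by ring
        _ = 2 * Real.sqrt γ * (Real.exp w * Real.exp (-m * Real.cosh (2*w))) := by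
            rw [key, key2]; ring
    rw [funext hsimp, integral_const_mul, aux_expw_gauss m hmpos]
    -- final algebra: 2√γ * (e^{-m} √(π/(2m))) = √(π/α) e^{-m}
    have hm2 : m = 2 * (α * γ) := by rw [hmdef, ← hαγ]
    have hfin : 2 * Real.sqrt γ * Real.sqrt (π/(2*m)) = Real.sqrt (π/α) := by
      have h4 : (2:ℝ) * Real.sqrt γ = Real.sqrt (4*γ) := by
        rw [Real.sqrt_mul (by norm_num),
          show Real.sqrt (4:ℝ) = 2 by
            rw [show (4:ℝ) = 2^2 by norm_num, Real.sqrt_sq (by norm_num)]]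
      rw [h4, ← Real.sqrt_mul (by positivity)]
      congr 1
      rw [hm2]
      field_simp
      ring
    calc 2 * Real.sqrt γ * (Real.exp (-m) * Real.sqrt (π/(2*m)))
        = (2 * Real.sqrt γ * Real.sqrt (π/(2*m))) * Real.exp (-m) := by ring
      _ = Real.sqrt (π/α) * Real.exp (-m) := by rw [hfin]
      _ = Real.sqrt (π/α) * Real.exp (-2 * Real.sqrt (α*β)) := by rw [hmdef]; ring_nf

set_option maxHeartbeats 1000000 in
lemma aux_K0_heat (r : ℝ) (hr : 0 < r) :
    K0 r = ∫ t in Ioi (0:ℝ), (1/(2*t)) * Real.exp (-t - r^2/(4*t)) := by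
  have hderiv : ∀ u : ℝ, HasDerivAt (fun u : ℝ => (r/2) * Real.exp u)
      ((r/2) * Real.exp u) u := fun u => (Real.hasDerivAt_exp u).const_mul (r/2)
  have hinj : InjOn (fun u : ℝ => (r/2) * Real.exp u) univ := by
    intro a _ b _ hab
    simp only at hab
    exact Real.exp_injective (mul_left_cancel₀ (by positivity) hab)
  have himg : (fun u : ℝ => (r/2) * Real.exp u) '' univ = Ioi 0 := by
    rw [image_univ]
    ext x
    simp only [mem_range, mem_Ioi]
    constructor
    · rintro ⟨u, rfl⟩; positivity
    · intro hx
      exact ⟨Real.log (x/(r/2)), by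
        rw [Real.exp_log (by positivity), mul_div_cancel₀ _ (by positivity)]⟩
  have h := integral_image_eq_integral_abs_deriv_smul MeasurableSet.univ
    (fun u (_ : u ∈ univ) => (hderiv u).hasDerivWithinAt) hinj
    (fun t => (1/(2*t)) * Real.exp (-t - r^2/(4*t)))
  rw [himg, Measure.restrict_univ] at h
  have hsimp : ∀ u : ℝ, |(r/2) * Real.exp u| •
      ((1/(2*((r/2) * Real.exp u))) *
        Real.exp (-((r/2) * Real.exp u) - r^2/(4*((r/2) * Real.exp u))))
      = (1/2) * Real.exp (-r * Real.cosh u) := by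
    intro u
    have he : Real.exp u ≠ 0 := Real.exp_ne_zero u
    have harg : -((r/2) * Real.exp u) - r^2/(4*((r/2) * Real.exp u))
        = -r * Real.cosh u := by
      rw [Real.cosh_eq, Real.exp_neg]
      field_simp
      ring
    rw [smul_eq_mul, abs_of_pos (by positivity), harg]
    field_simp
  rw [funext hsimp] at h
  have habs : ∫ u : ℝ, Real.exp (-r * Real.cosh u)
      = 2 * ∫ u in Ioi (0:ℝ), Real.exp (-r * Real.cosh u) := by
    rw [← integral_comp_abs (f := fun u => Real.exp (-r * Real.cosh u))]
    congr 1
    funext u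
    rw [Real.cosh_abs]
  have h2 : ∫ u : ℝ, (1/2) * Real.exp (-r * Real.cosh u)
      = ∫ u in Ioi (0:ℝ), Real.exp (-r * Real.cosh u) := by
    rw [integral_const_mul, habs]
    ring
  rw [h2] at h
  exact h.symm

lemma aux_fubini (b c y : ℝ) (hc : 0 < c) (hcb : c^2 - b^2 = 1) :
    Integrable (fun ξ : ℝ => K0 (Real.sqrt (ξ^2 + y^2) * c) * Real.exp (-b * ξ)) ∧
    ∫ ξ : ℝ, K0 (Real.sqrt (ξ^2 + y^2) * c) * Real.exp (-b * ξ)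
      = π * Real.exp (-|y|) := by
  set G : ℝ → ℝ → ℝ :=
    fun t ξ => (1/(2*t)) * Real.exp (-t - c^2*(ξ^2+y^2)/(4*t) - b*ξ) with hG
  set S : ℝ → ℝ := fun t =>
    (Real.sqrt π / c) * ((Real.sqrt t)⁻¹ *
      Real.exp (-((1/c^2) * t) - (c^2*y^2/4)/t)) with hS
  -- decomposition of G as product
  have hGdec : ∀ t : ℝ, 0 < t → (fun ξ => G t ξ) =
      fun ξ => ((1/(2*t)) * Real.exp (-t - c^2*y^2/(4*t))) *
        Real.exp (-(c^2/(4*t) * ξ^2) - b*ξ) := by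
    intro t ht
    funext ξ
    rw [hG]
    simp only
    rw [show -t - c^2*(ξ^2+y^2)/(4*t) - b*ξ
        = (-t - c^2*y^2/(4*t)) + (-(c^2/(4*t) * ξ^2) - b*ξ) by field_simp; ring,
      Real.exp_add]
    ring
  -- value of the inner integral
  have hSval : ∀ t ∈ Ioi (0:ℝ), ∫ ξ : ℝ, G t ξ = S t := by
    intro t ht
    have ht0 : (0:ℝ) < t := ht
    rw [hGdec t ht0, integral_const_mul,
      aux_gauss_lin (c^2/(4*t)) b (div_pos (pow_pos hc 2) (by linarith))]
    have e1 : Real.sqrt (π/(c^2/(4*t))) = 2 * Real.sqrt t * Real.sqrt π / c := by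
      rw [show π/(c^2/(4*t)) = (2 * Real.sqrt t * Real.sqrt π / c)^2 by
        rw [div_pow, mul_pow, mul_pow, Real.sq_sqrt (le_of_lt ht),
          Real.sq_sqrt (le_of_lt Real.pi_pos)]
        field_simp
        ring]
      exact Real.sqrt_sq (div_nonneg (by positivity) hc.le)
    have e2 : b^2/(4*(c^2/(4*t))) = b^2*t/c^2 := by field_simp
    rw [e1, e2, hS]
    simp only
    have ht' : Real.sqrt t ≠ 0 := ne_of_gt (Real.sqrt_pos.2 ht0)
    have htt : Real.sqrt t * Real.sqrt t = t := Real.mul_self_sqrt (le_of_lt ht0)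
    have eexp : -t - c^2*y^2/(4*t) + b^2*t/c^2 = -(1/c^2 * t) - c^2*y^2/4/t := by
      have hb2 : b^2 = c^2 - 1 := by linarith
      rw [hb2]
      field_simp
      ring
    have hE : Real.exp (-t - c^2*y^2/(4*t)) * Real.exp (b^2*t/c^2)
        = Real.exp (-(1/c^2 * t) - c^2*y^2/4/t) := by
      rw [← Real.exp_add, eexp]
    have h3 : 1/(2*t) * (2*Real.sqrt t) = (Real.sqrt t)⁻¹ := by
      field_simp
      nlinarith [htt]
    calc 1/(2*t) * Real.exp (-t - c^2*y^2/(4*t)) *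
          (2*Real.sqrt t*Real.sqrt π/c * Real.exp (b^2*t/c^2))
        = (Real.sqrt π / c) * ((1/(2*t) * (2*Real.sqrt t)) *
            (Real.exp (-t - c^2*y^2/(4*t)) * Real.exp (b^2*t/c^2))) := by ring
      _ = (Real.sqrt π / c) * ((Real.sqrt t)⁻¹ *
            Real.exp (-(1/c^2 * t) - c^2*y^2/4/t)) := by rw [hE, h3]
  -- measurability
  have hGm : Measurable (Function.uncurry G) := by
    rw [hG]
    unfold Function.uncurry
    apply Measurable.mul
    · exact measurable_const.div (measurable_fst.const_mul 2)
    · apply Real.measurable_exp.comp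
      apply Measurable.sub
      · apply Measurable.sub
        · exact measurable_fst.neg
        · exact (((measurable_snd.pow_const 2).add_const (y^2)).const_mul (c^2)).div
            (measurable_fst.const_mul 4)
      · exact measurable_snd.const_mul b
  have hGnonneg : ∀ t : ℝ, 0 < t → ∀ ξ : ℝ, ‖G t ξ‖ = G t ξ := by
    intro t ht ξ
    rw [Real.norm_eq_abs, hG]
    simp only
    exact abs_of_nonneg (mul_nonneg (div_nonneg zero_le_one (by linarith))
      (Real.exp_pos _).le)
  -- integrability on the product
  have hprod : Integrable (Function.uncurry G) ((volume.restrict (Ioi 0)).prod volume) := by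
    rw [integrable_prod_iff hGm.aestronglyMeasurable]
    constructor
    · filter_upwards [ae_restrict_mem measurableSet_Ioi] with t ht
      have ht0 : (0:ℝ) < t := ht
      rw [show (fun ξ => Function.uncurry G (t, ξ)) = (fun ξ => G t ξ) from rfl, hGdec t ht0]
      exact (aux_integrable_gauss_lin (c^2/(4*t)) b
        (div_pos (pow_pos hc 2) (by linarith))).const_mul _
    · have hSint : IntegrableOn S (Ioi 0) := by
        refine Integrable.mono' ((aux_integrableOn_rpow_exp (1/c^2)
          (by positivity)).const_mul (Real.sqrt π / c)) ?_ ?_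
        · refine (Measurable.aestronglyMeasurable ?_)
          rw [hS]
          apply Measurable.const_mul
          apply Measurable.mul
          · exact Real.continuous_sqrt.measurable.inv
          · apply Real.measurable_exp.comp
            exact (measurable_id.const_mul (1/c^2)).neg.sub
              (measurable_const.div measurable_id)
        · filter_upwards [ae_restrict_mem measurableSet_Ioi] with t ht
          have ht0 : (0:ℝ) < t := ht
          rw [hS]
          simp only
          rw [Real.norm_eq_abs, abs_of_nonneg (by positivity)]
          apply mul_le_mul_of_nonneg_left ?_ (div_nonneg (Real.sqrt_nonneg _) hc.le)
          apply mul_le_mul_of_nonneg_left ?_ (inv_nonneg.2 (Real.sqrt_nonneg _))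
          rw [Real.exp_le_exp]
          have h0 : 0 ≤ c^2*y^2/4/t := div_nonneg (by positivity) ht0.le
          linarith
      refine hSint.congr ?_
      filter_upwards [ae_restrict_mem measurableSet_Ioi] with t ht
      have ht0 : (0:ℝ) < t := ht
      rw [← hSval t ht]
      congr 1
      funext ξ
      rw [show Function.uncurry G (t, ξ) = G t ξ from rfl, hGnonneg t ht0 ξ]
  have hswap := hprod.swap
  have hmarg : Integrable (fun ξ : ℝ => ∫ t in Ioi (0:ℝ), G t ξ) volume :=
    hswap.integral_prod_left
  have hswapint : (∫ ξ : ℝ, ∫ t in Ioi (0:ℝ), G t ξ)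
      = ∫ t in Ioi (0:ℝ), ∫ ξ : ℝ, G t ξ :=
    integral_integral_swap (f := fun ξ t => G t ξ) hswap
  -- a.e. identification with the Bessel form
  have hae : ∀ᵐ ξ : ℝ, K0 (Real.sqrt (ξ^2+y^2) * c) * Real.exp (-b*ξ)
      = ∫ t in Ioi (0:ℝ), G t ξ := by
    have hnull : {ξ : ℝ | ¬ (0 < ξ^2 + y^2)} ⊆ ({0} : Set ℝ) := by
      intro ξ hξ
      simp only [mem_setOf_eq, not_lt] at hξ
      have h1 : ξ = 0 := by nlinarith [sq_nonneg ξ, sq_nonneg y]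
      simpa using h1
    have hmem : ∀ᵐ ξ : ℝ, 0 < ξ^2 + y^2 := by
      rw [ae_iff]
      exact measure_mono_null hnull (measure_singleton 0)
    filter_upwards [hmem] with ξ hξ
    have hr : 0 < Real.sqrt (ξ^2+y^2) * c := mul_pos (Real.sqrt_pos.2 hξ) hc
    rw [aux_K0_heat _ hr, ← integral_mul_const]
    refine setIntegral_congr_fun measurableSet_Ioi fun t ht => ?_
    have ht0 : (0:ℝ) < t := ht
    have hr2 : (Real.sqrt (ξ^2+y^2) * c)^2 = c^2*(ξ^2+y^2) := by
      rw [mul_pow, Real.sq_sqrt (by positivity)]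
      ring
    rw [hr2, hG]
    simp only
    rw [mul_assoc, ← Real.exp_add]
    congr 2
    ring
  constructor
  · exact hmarg.congr (hae.mono fun ξ h => h.symm)
  · rw [integral_congr_ae hae, hswapint, setIntegral_congr_fun measurableSet_Ioi hSval,
      hS]
    simp only
    rw [integral_const_mul, aux_bessel_half (1/c^2) (c^2*y^2/4) (one_div_pos.2 (pow_pos hc 2)) (div_nonneg (by positivity) (by norm_num))]
    have e6 : Real.sqrt (1/c^2 * (c^2*y^2/4)) = |y|/2 := by
      rw [show 1/c^2 * (c^2*y^2/4) = (y/2)^2 by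
          rw [show (y/2)^2 = y^2/4 by ring]; field_simp, Real.sqrt_sq_eq_abs, abs_div]
      norm_num
    have e7 : Real.sqrt (π/(1/c^2)) = c * Real.sqrt π := by
      rw [show π/(1/c^2) = c^2 * π by field_simp, Real.sqrt_mul (by positivity),
        Real.sqrt_sq hc.le]
    rw [e6, e7, show -2 * (|y|/2) = -|y| by ring]
    have hππ : Real.sqrt π * Real.sqrt π = π := Real.mul_self_sqrt Real.pi_pos.le
    field_simp
    linear_combination hππ

/-- for fixed `v` and `y`, `u(x, y) → e^{-|y|}/2` as `x → -∞`. -/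
theorem stmt_11 (v y : ℝ) :
    Tendsto (fun x : ℝ => frontProfile v x y) atBot (nhds (Real.exp (-|y|) / 2)) := by
  have hc : 0 < Real.sqrt (1 + v ^ 2 / 4) := Real.sqrt_pos.2 (by positivity)
  have hcb : Real.sqrt (1 + v ^ 2 / 4) ^ 2 - (v / 2) ^ 2 = 1 := by
    rw [Real.sq_sqrt (by positivity)]; ring
  obtain ⟨hint, hval⟩ := aux_fubini (v / 2) (Real.sqrt (1 + v ^ 2 / 4)) y hc hcb
  set F : ℝ → ℝ := fun ξ => K0 (Real.sqrt (ξ ^ 2 + y ^ 2) * Real.sqrt (1 + v ^ 2 / 4)) *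
    Real.exp (-(v / 2) * ξ) with hF
  have hmono : Monotone (fun n : ℝ => Ioi (-n)) :=
    fun a b hab => Ioi_subset_Ioi (neg_le_neg hab)
  have hunion : (⋃ n : ℝ, Ioi (-n)) = univ := by
    ext x
    simp only [mem_iUnion, mem_Ioi, mem_univ, iff_true]
    exact ⟨-x + 1, by linarith⟩
  have h1 := tendsto_setIntegral_of_monotone (s := fun n : ℝ => Ioi (-n))
    (fun n => measurableSet_Ioi) hmono (by rw [hunion]; exact hint.integrableOn)
  rw [hunion, setIntegral_univ, hval] at h1
  have h2 : Tendsto (fun x : ℝ => ∫ ξ in Ioi x, F ξ) atBot (nhds (π * Real.exp (-|y|))) := by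
    have := h1.comp tendsto_neg_atBot_atTop
    simpa only [Function.comp_def, neg_neg] using this
  have h3 := h2.const_mul (1 / (2 * π))
  have hfront : (fun x : ℝ => frontProfile v x y)
      = fun x => (1 / (2 * π)) * ∫ ξ in Ioi x, F ξ := by
    funext x; rfl
  have hlim : (1 / (2 * π)) * (π * Real.exp (-|y|)) = Real.exp (-|y|) / 2 := by
    field_simp
  rw [hfront, ← hlim]
  exact h3
end

section
/- The supremum over x ∈ ℝ and y ∈ ℝ of u(x, y) = (1/(2π)) ∫_x^∞ K₀(√(ξ² + y²)·√(1 + v²/4)) exp(-(v/2)ξ) dξ is 1/2, attained in the limit x → -∞, y = 0; in particular u(x, y) < 1/2 for all (x, y). -/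
open Real Filter Set MeasureTheory Topology

-- basic exponential integrals
private lemma exp_intOn {c : ℝ} (hc : 0 < c) :
    IntegrableOn (fun x : ℝ => Real.exp (-(c * x))) (Ioi 0) := by
  simpa [neg_mul] using exp_neg_integrableOn_Ioi 0 hc

private lemma exp_int {c : ℝ} (hc : 0 < c) :
    ∫ x in Ioi (0:ℝ), Real.exp (-(c * x)) = 1 / c := by
  have hd : ∀ x ∈ Ici (0:ℝ), HasDerivAt (fun x : ℝ => -Real.exp (-(c * x)) / c)
      (Real.exp (-(c * x))) x := by
    intro x _
    have h1 : HasDerivAt (fun x : ℝ => -(c * x)) (-c) x := by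
      simpa [neg_mul] using (hasDerivAt_id x).const_mul (-c)
    have h3 := (h1.exp.div_const c).neg
    convert h3 using 1
    · rfl
    · rfl
    · funext y; rw [neg_div]; rfl
    · rw [mul_neg, mul_comm, neg_div, neg_neg, mul_div_assoc, div_self hc.ne', mul_one]
  have ht : Tendsto (fun x : ℝ => -Real.exp (-(c * x)) / c) atTop (𝓝 0) := by
    have h1 : Tendsto (fun x : ℝ => -(c * x)) atTop atBot :=
      tendsto_neg_atTop_atBot.comp (Tendsto.const_mul_atTop hc tendsto_id)
    have h2 : Tendsto (fun x : ℝ => Real.exp (-(c * x))) atTop (𝓝 0) :=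
      Real.tendsto_exp_atBot.comp h1
    simpa using (h2.neg).div_const c
  rw [integral_Ioi_of_hasDerivAt_of_nonneg' hd (fun x _ => (Real.exp_pos _).le) ht]
  simp [div_eq_mul_inv]

private lemma exp_intOn_Iic {d : ℝ} (hd : 0 < d) :
    IntegrableOn (fun ξ : ℝ => Real.exp (d * ξ)) (Iic 0) := by
  have h := ((Measure.measurePreserving_neg (volume : Measure ℝ)).integrableOn_comp_preimage
      (Homeomorph.neg ℝ).measurableEmbedding).2 (exp_intOn hd)
  simp only [Function.comp_def, neg_preimage, neg_Ioi, neg_zero, neg_neg] at h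
  have h' : IntegrableOn (fun ξ : ℝ => Real.exp (d * ξ)) (Iio 0) := by
    refine h.congr_fun (fun x _ => ?_) measurableSet_Iio
    ring_nf
  exact h'.congr_set_ae Iio_ae_eq_Iic.symm

private lemma exp_int_Iic {d : ℝ} (hd : 0 < d) :
    ∫ ξ in Iic (0:ℝ), Real.exp (d * ξ) = 1 / d := by
  have h2 := integral_comp_neg_Iic (c := (0:ℝ)) (f := fun x : ℝ => Real.exp (-(d * x)))
  simp only [neg_zero] at h2
  rw [← exp_int hd, ← h2]
  refine setIntegral_congr_fun measurableSet_Iic (fun ξ _ => ?_)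
  ring_nf

private lemma two_sided_int {b c : ℝ} (hbc : |b| < c) :
    Integrable (fun ξ : ℝ => Real.exp (-(c * |ξ| + b * ξ))) := by
  obtain ⟨h1, h2⟩ := abs_lt.1 hbc
  have hb1 : 0 < c + b := by linarith
  have hb2 : 0 < c - b := by linarith
  have hi1 : IntegrableOn (fun ξ : ℝ => Real.exp (-(c * |ξ| + b * ξ))) (Ioi 0) := by
    refine (exp_intOn hb1).congr_fun (fun ξ hξ => ?_) measurableSet_Ioi
    rw [abs_of_pos hξ]; ring_nf
  have hi2 : IntegrableOn (fun ξ : ℝ => Real.exp (-(c * |ξ| + b * ξ))) (Iic 0) := by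
    refine (exp_intOn_Iic hb2).congr_fun (fun ξ hξ => ?_) measurableSet_Iic
    rw [abs_of_nonpos hξ]; ring_nf
  have := hi2.union hi1
  rwa [Iic_union_Ioi, integrableOn_univ] at this

private lemma two_sided_eq {b c : ℝ} (hbc : |b| < c) :
    ∫ ξ : ℝ, Real.exp (-(c * |ξ| + b * ξ)) = 1 / (c + b) + 1 / (c - b) := by
  obtain ⟨h1, h2⟩ := abs_lt.1 hbc
  have hb1 : 0 < c + b := by linarith
  have hb2 : 0 < c - b := by linarith
  have hi1 : IntegrableOn (fun ξ : ℝ => Real.exp (-(c * |ξ| + b * ξ))) (Ioi 0) :=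
    (two_sided_int hbc).integrableOn
  have hi2 : IntegrableOn (fun ξ : ℝ => Real.exp (-(c * |ξ| + b * ξ))) (Iic 0) :=
    (two_sided_int hbc).integrableOn
  rw [← intervalIntegral.integral_Iic_add_Ioi (b := (0:ℝ)) hi2 hi1]
  have e1 : ∫ ξ in Ioi (0:ℝ), Real.exp (-(c * |ξ| + b * ξ)) = 1 / (c + b) := by
    rw [← exp_int hb1]
    refine setIntegral_congr_fun measurableSet_Ioi (fun ξ hξ => ?_)
    rw [abs_of_pos hξ]; ring_nf
  have e2 : ∫ ξ in Iic (0:ℝ), Real.exp (-(c * |ξ| + b * ξ)) = 1 / (c - b) := by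
    rw [← exp_int_Iic hb2]
    refine setIntegral_congr_fun measurableSet_Iic (fun ξ hξ => ?_)
    rw [abs_of_nonpos hξ]; ring_nf
  rw [e1, e2]; ring

private lemma phi_hasDeriv {a b : ℝ} (ha : 0 < a) (ha2 : a ^ 2 = 1 + b ^ 2)
    (hba : |b| < a) (t : ℝ) :
    HasDerivAt (fun t : ℝ => 2 * Real.arctan (a * Real.sinh t))
      (1 / (a * Real.cosh t + b) + 1 / (a * Real.cosh t - b)) t := by
  have hc1 : 0 < a * Real.cosh t + b := by
    have := Real.one_le_cosh t
    have := abs_lt.1 hba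
    nlinarith
  have hc2 : 0 < a * Real.cosh t - b := by
    have := Real.one_le_cosh t
    have := abs_lt.1 hba
    nlinarith
  have h1 : HasDerivAt (fun t : ℝ => a * Real.sinh t) (a * Real.cosh t) t :=
    (Real.hasDerivAt_sinh t).const_mul a
  have h2 := (Real.hasDerivAt_arctan (a * Real.sinh t)).comp t h1
  have h3 := h2.const_mul (2 : ℝ)
  refine h3.congr_deriv ?_
  have key : (a * Real.cosh t + b) * (a * Real.cosh t - b) = 1 + (a * Real.sinh t) ^ 2 := by
    have hcs := Real.cosh_sq_sub_sinh_sq t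
    linear_combination a ^ 2 * hcs + ha2
  rw [div_add_div _ _ hc1.ne' hc2.ne', key]
  have hpos : (0:ℝ) < 1 + (a * Real.sinh t) ^ 2 := by positivity
  field_simp
  ring

private lemma phi_tendsto {a : ℝ} (ha : 0 < a) :
    Tendsto (fun t : ℝ => 2 * Real.arctan (a * Real.sinh t)) atTop (𝓝 π) := by
  have hs : Tendsto Real.sinh atTop atTop := by
    refine tendsto_atTop_mono' atTop ?_ tendsto_id
    filter_upwards [eventually_ge_atTop (0:ℝ)] with t ht
    rcases ht.eq_or_lt with h | h
    · simp [← h]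
    · exact (Real.self_lt_sinh_iff.2 h).le
  have h1 : Tendsto (fun t : ℝ => a * Real.sinh t) atTop atTop :=
    Tendsto.const_mul_atTop ha hs
  have h2 : Tendsto (fun t : ℝ => Real.arctan (a * Real.sinh t)) atTop (𝓝 (π / 2)) :=
    (Real.tendsto_arctan_atTop.mono_right nhdsWithin_le_nhds).comp h1
  have h3 := h2.const_mul (2 : ℝ)
  convert h3 using 2
  ring

private lemma phi_nonneg {a b : ℝ} (hba : |b| < a) (t : ℝ) :
    0 ≤ 1 / (a * Real.cosh t + b) + 1 / (a * Real.cosh t - b) := by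
  have hc1 : 0 < a * Real.cosh t + b := by
    have := Real.one_le_cosh t; have := abs_lt.1 hba; nlinarith
  have hc2 : 0 < a * Real.cosh t - b := by
    have := Real.one_le_cosh t; have := abs_lt.1 hba; nlinarith
  positivity

private lemma phi_integrableOn {a b : ℝ} (ha : 0 < a) (ha2 : a ^ 2 = 1 + b ^ 2) (hba : |b| < a) :
    IntegrableOn (fun t : ℝ => 1 / (a * Real.cosh t + b) + 1 / (a * Real.cosh t - b)) (Ioi 0) := by
  exact integrableOn_Ioi_deriv_of_nonneg' (fun t _ => phi_hasDeriv ha ha2 hba t)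
    (fun t _ => phi_nonneg hba t) (phi_tendsto ha)

private lemma phi_integral {a b : ℝ} (ha : 0 < a) (ha2 : a ^ 2 = 1 + b ^ 2) (hba : |b| < a) :
    ∫ t in Ioi (0:ℝ), (1 / (a * Real.cosh t + b) + 1 / (a * Real.cosh t - b)) = π := by
  rw [integral_Ioi_of_hasDerivAt_of_nonneg' (fun t _ => phi_hasDeriv ha ha2 hba t)
    (fun t _ => phi_nonneg hba t) (phi_tendsto ha)]
  simp

private lemma K0_nonneg (r : ℝ) : 0 ≤ K0 r :=
  integral_nonneg fun _ => (Real.exp_pos _).le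

private lemma K0_intOn {r : ℝ} (hr : 0 < r) :
    IntegrableOn (fun t : ℝ => Real.exp (-r * Real.cosh t)) (Ioi 0) := by
  refine (exp_intOn hr).mono' (Continuous.aestronglyMeasurable (by fun_prop)) ?_
  filter_upwards [ae_restrict_mem measurableSet_Ioi] with t ht
  rw [Real.norm_eq_abs, abs_of_pos (Real.exp_pos _)]
  refine Real.exp_le_exp.2 ?_
  have h1 : t ≤ Real.cosh t := by
    have h2 : Real.sinh t < Real.cosh t := Real.sinh_lt_cosh t
    have h3 : t < Real.sinh t := Real.self_lt_sinh_iff.2 ht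
    linarith
  nlinarith

private lemma K0_pos {r : ℝ} (hr : 0 < r) : 0 < K0 r := by
  have h2 : ∫ t in Ioc (0:ℝ) 1, Real.exp (-r * Real.cosh 1)
      ≤ ∫ t in Ioc (0:ℝ) 1, Real.exp (-r * Real.cosh t) := by
    refine setIntegral_mono_on ?_ ((K0_intOn hr).mono_set Ioc_subset_Ioi_self)
      measurableSet_Ioc (fun t ht => ?_)
    · exact integrableOn_const (by simp)
    · refine Real.exp_le_exp.2 ?_
      have : Real.cosh t ≤ Real.cosh 1 := by
        rw [Real.cosh_le_cosh]
        rw [abs_of_pos ht.1, abs_one]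
        exact ht.2
      nlinarith
  have h3 : (0:ℝ) < ∫ t in Ioc (0:ℝ) 1, Real.exp (-r * Real.cosh 1) := by
    rw [setIntegral_const]
    simp [Real.volume_Ioc]
    positivity
  have h1 : ∫ t in Ioc (0:ℝ) 1, Real.exp (-r * Real.cosh t) ≤ K0 r := by
    refine setIntegral_mono_set (K0_intOn hr) ?_ (HasSubset.Subset.eventuallyLE Ioc_subset_Ioi_self)
    exact Eventually.of_forall fun t => (Real.exp_pos _).le
  linarith

private lemma K0_anti {r s : ℝ} (hr : 0 < r) (hrs : r ≤ s) : K0 s ≤ K0 r := by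
  refine integral_mono_of_nonneg (Eventually.of_forall fun t => (Real.exp_pos _).le)
    (K0_intOn hr) (Eventually.of_forall fun t => ?_)
  have := Real.cosh_pos t
  exact Real.exp_le_exp.2 (by nlinarith)

private noncomputable def Afun (v : ℝ) : ℝ := Real.sqrt (1 + v ^ 2 / 4)

private lemma Afun_pos (v : ℝ) : 0 < Afun v := Real.sqrt_pos.2 (by positivity)

private lemma Afun_sq (v : ℝ) : (Afun v) ^ 2 = 1 + (v / 2) ^ 2 := by
  rw [Afun, Real.sq_sqrt (by positivity)]; ring

private lemma Afun_gt (v : ℝ) : |v / 2| < Afun v := by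
  have h1 : (v / 2) ^ 2 < (Afun v) ^ 2 := by rw [Afun_sq]; linarith
  calc |v / 2| = Real.sqrt ((v / 2) ^ 2) := (Real.sqrt_sq_eq_abs _).symm
    _ < Real.sqrt ((Afun v) ^ 2) := Real.sqrt_lt_sqrt (sq_nonneg _) h1
    _ = Afun v := Real.sqrt_sq (Afun_pos v).le

private noncomputable def gfun (v : ℝ) (ξ : ℝ) : ℝ :=
  K0 (|ξ| * Afun v) * Real.exp (-(v / 2) * ξ)

private lemma gfun_key (v : ℝ) : Integrable (gfun v) ∧ ∫ ξ : ℝ, gfun v ξ = π := by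
  have hA := Afun_pos v
  have hA2 := Afun_sq v
  have hAb := Afun_gt v
  set a := Afun v with ha_def
  set b := v / 2 with hb_def
  set f : ℝ → ℝ → ℝ :=
    fun t ξ => Real.exp (-(|ξ| * a) * Real.cosh t) * Real.exp (-(v / 2) * ξ) with hf
  have hf_eq : ∀ t ξ, f t ξ = Real.exp (-(a * Real.cosh t * |ξ| + b * ξ)) := by
    intro t ξ
    rw [hf]
    dsimp only
    rw [← Real.exp_add]
    congr 1
    rw [hb_def]
    ring
  have hc : ∀ t : ℝ, |b| < a * Real.cosh t := fun t =>
    lt_of_lt_of_le hAb (by nlinarith [Real.one_le_cosh t])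
  have hmeas : AEStronglyMeasurable (Function.uncurry f)
      ((volume.restrict (Ioi 0)).prod volume) := by
    refine Continuous.aestronglyMeasurable ?_
    rw [hf]
    fun_prop
  have hF : Integrable (Function.uncurry f) ((volume.restrict (Ioi 0)).prod volume) := by
    rw [integrable_prod_iff hmeas]
    constructor
    · exact Eventually.of_forall fun t =>
        (two_sided_int (hc t)).congr (Eventually.of_forall fun ξ => (hf_eq t ξ).symm)
    · refine (phi_integrableOn hA hA2 hAb).congr (Eventually.of_forall fun t => ?_)
      have h1 : (fun ξ : ℝ => ‖Function.uncurry f (t, ξ)‖)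
          = fun ξ => Real.exp (-(a * Real.cosh t * |ξ| + b * ξ)) := funext fun ξ => by
        rw [Function.uncurry_apply_pair, hf_eq, Real.norm_eq_abs,
          abs_of_pos (Real.exp_pos _)]
      dsimp only
      rw [h1, two_sided_eq (hc t)]
  have hK : ∀ ξ : ℝ, (∫ t in Ioi (0:ℝ), f t ξ) = gfun v ξ := by
    intro ξ
    rw [hf]
    dsimp only
    rw [integral_mul_const]
    rfl
  refine ⟨(hF.integral_prod_right).congr (Eventually.of_forall hK), ?_⟩
  calc ∫ ξ : ℝ, gfun v ξ = ∫ ξ : ℝ, ∫ t in Ioi (0:ℝ), f t ξ :=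
        integral_congr_ae (Eventually.of_forall fun ξ => (hK ξ).symm)
    _ = ∫ t in Ioi (0:ℝ), ∫ ξ : ℝ, f t ξ := (integral_integral_swap hF).symm
    _ = ∫ t in Ioi (0:ℝ), (1 / (a * Real.cosh t + b) + 1 / (a * Real.cosh t - b)) := by
        refine integral_congr_ae (Eventually.of_forall fun t => ?_)
        dsimp only
        rw [← two_sided_eq (hc t)]
        exact integral_congr_ae (Eventually.of_forall fun ξ => hf_eq t ξ)
    _ = π := phi_integral hA hA2 hAb

/-- `sup_{x,y} u(x,y) = 1/2`, attained in the limit `x → -∞`, `y = 0`;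
in particular `u(x,y) < 1/2` everywhere. -/
theorem stmt_12 (v : ℝ) :
    (∀ x y : ℝ, frontProfile v x y < 1 / 2) ∧
    IsLUB {z : ℝ | ∃ x y : ℝ, frontProfile v x y = z} (1 / 2) ∧
    Tendsto (fun x : ℝ => frontProfile v x 0) atBot (nhds (1 / 2)) := by
  have hA := Afun_pos v
  obtain ⟨hg_int, hJ⟩ := gfun_key v
  have hπ := Real.pi_pos
  have h0ne : ∀ᵐ ξ : ℝ, ξ ≠ (0:ℝ) := by
    rw [ae_iff]
    simp only [ne_eq, not_not, Set.setOf_eq_eq_singleton]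
    exact measure_singleton 0
  have hg_nonneg : ∀ ξ, 0 ≤ gfun v ξ := fun ξ =>
    mul_nonneg (K0_nonneg _) (Real.exp_pos _).le
  have hbound : ∀ x y : ℝ, frontProfile v x y ≤ (1 / (2 * π)) * ∫ ξ in Ioi x, gfun v ξ := by
    intro x y
    unfold frontProfile
    refine mul_le_mul_of_nonneg_left ?_ (by positivity)
    refine integral_mono_of_nonneg
      (Eventually.of_forall fun ξ => mul_nonneg (K0_nonneg _) (Real.exp_pos _).le)
      hg_int.integrableOn ?_
    filter_upwards [ae_restrict_of_ae h0ne] with ξ hξ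
    unfold gfun
    refine mul_le_mul_of_nonneg_right ?_ (Real.exp_pos _).le
    refine K0_anti (mul_pos (abs_pos.2 hξ) hA) ?_
    simp only [Afun]
    refine mul_le_mul_of_nonneg_right ?_ (Real.sqrt_nonneg _)
    calc |ξ| = Real.sqrt (ξ ^ 2) := (Real.sqrt_sq_eq_abs ξ).symm
      _ ≤ Real.sqrt (ξ ^ 2 + y ^ 2) := Real.sqrt_le_sqrt (by nlinarith [sq_nonneg y])
  have hsplit : ∀ x : ℝ, (∫ ξ in Iic x, gfun v ξ) + (∫ ξ in Ioi x, gfun v ξ) = π := fun x => by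
    rw [intervalIntegral.integral_Iic_add_Ioi hg_int.integrableOn hg_int.integrableOn, hJ]
  have hIicpos : ∀ x : ℝ, 0 < ∫ ξ in Iic x, gfun v ξ := by
    intro x
    rw [setIntegral_pos_iff_support_of_nonneg_ae
      (Eventually.of_forall hg_nonneg) hg_int.integrableOn]
    have hsub : Iio (min x 0) ⊆ Function.support (gfun v) ∩ Iic x := by
      intro ξ hξ
      have hξ0 : ξ < 0 := lt_of_lt_of_le hξ (min_le_right _ _)
      refine ⟨ne_of_gt (mul_pos (K0_pos (mul_pos (abs_pos.2 hξ0.ne) hA))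
        (Real.exp_pos _)), le_of_lt (lt_of_lt_of_le hξ (min_le_left x 0))⟩
    refine lt_of_lt_of_le ?_ (measure_mono hsub)
    rw [Real.volume_Iio]
    exact ENNReal.zero_lt_top
  have hlt : ∀ x : ℝ, (∫ ξ in Ioi x, gfun v ξ) < π := fun x => by
    have := hsplit x; have := hIicpos x; linarith
  have hval : (1 / (2 * π)) * π = 1 / 2 := by field_simp
  have h1 : ∀ x y : ℝ, frontProfile v x y < 1 / 2 := by
    intro x y
    refine lt_of_le_of_lt (hbound x y) ?_
    rw [← hval]
    exact mul_lt_mul_of_pos_left (hlt x) (by positivity)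
  have heq0 : ∀ x : ℝ, frontProfile v x 0 = (1 / (2 * π)) * ∫ ξ in Ioi x, gfun v ξ := by
    intro x
    unfold frontProfile gfun
    congr 1
    refine integral_congr_ae (Eventually.of_forall fun ξ => ?_)
    have hs : Real.sqrt (ξ ^ 2 + 0 ^ 2) = |ξ| := by
      rw [show ξ ^ 2 + 0 ^ 2 = ξ ^ 2 by ring, Real.sqrt_sq_eq_abs]
    dsimp only
    rw [hs]
    simp only [Afun]
  have htendIic : Tendsto (fun x : ℝ => ∫ ξ in Iic x, gfun v ξ) atBot (𝓝 0) := by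
    have h := tendsto_integral_filter_of_dominated_convergence (μ := volume) (l := atBot)
      (F := fun (x : ℝ) (ξ : ℝ) => (Iic x).indicator (gfun v) ξ)
      (f := fun _ : ℝ => (0:ℝ)) (bound := fun ξ => ‖gfun v ξ‖)
      (Eventually.of_forall fun x => hg_int.aestronglyMeasurable.indicator measurableSet_Iic)
      (Eventually.of_forall fun x => Eventually.of_forall fun ξ =>
        norm_indicator_le_norm_self _ _)
      hg_int.norm
      (Eventually.of_forall fun ξ => by
        refine Tendsto.congr' ?_ tendsto_const_nhds
        filter_upwards [eventually_lt_atBot ξ] with x hx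
        exact (indicator_of_notMem (by simpa using hx.not_ge) _).symm)
    simp only [integral_indicator measurableSet_Iic, integral_zero] at h
    exact h
  have htend : Tendsto (fun x : ℝ => frontProfile v x 0) atBot (𝓝 (1 / 2)) := by
    have h2 : Tendsto (fun x : ℝ => (1 / (2 * π)) * (π - ∫ ξ in Iic x, gfun v ξ)) atBot
        (𝓝 ((1 / (2 * π)) * (π - 0))) := (tendsto_const_nhds.sub htendIic).const_mul _
    have h3 : (fun x : ℝ => (1 / (2 * π)) * (π - ∫ ξ in Iic x, gfun v ξ))
        = fun x : ℝ => frontProfile v x 0 := funext fun x => by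
      rw [heq0 x]
      have := hsplit x
      congr 1
      linarith
    have hval2 : (1 / (2 * π)) * (π - 0) = 1 / 2 := by rw [sub_zero]; exact hval
    rw [← h3, ← hval2]
    exact h2
  refine ⟨h1, ⟨?_, ?_⟩, htend⟩
  · rintro z ⟨x, y, rfl⟩
    exact (h1 x y).le
  · intro c hc
    exact le_of_tendsto htend (Eventually.of_forall fun x => hc ⟨x, 0, rfl⟩)
end
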